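/- arXiv:1908.11606 — 3 statements merged into one kernel-verified Lean document; each statement's English description precedes it below -/
import Mathlib

section
/- Let E be a bounded complex in an additive category, E₁ a subcomplex of E, and suppose E₁ = E₂ ⊕ T as complexes with T contractible of the form [B →~ B] concentrated in two adjacent degrees (the differential an isomorphism). Then there exists a decomposition E = Ẽ ⊕ T' with T' ≅ T such that E₂ is a subcomplex of Ẽ. -/
/- STATEMENT 16 (Gaussian elimination): let `E` be a bounded complex (of modules), `S` a
subcomplex of `E` by direct summands, and `S = S₂ ⊕ T` with `T` contractible of the form
`[B ≅ B]` concentrated in degrees `n₀, n₀+1` (the differential restricting to an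
isomorphism).  Then there is a decomposition `E = Ẽ ⊕ T'` with `T' ≅ T` (as complexes)
and `S₂` a subcomplex of `Ẽ`. -/
theorem gaussian_elimination_subcomplex
    {R : Type} [Ring R] (Mod : ℤ → Type)
    [∀ k, AddCommGroup (Mod k)] [∀ k, Module R (Mod k)]
    (d : ∀ k : ℤ, Mod k →ₗ[R] Mod (k + 1))
    (hdd : ∀ (k : ℤ) (x : Mod k), d (k + 1) (d k x) = 0)
    (hbdd : ∃ a b : ℤ, ∀ k : ℤ, (k < a ∨ b < k) → ∀ x : Mod k, x = 0)
    (S S₂ T : ∀ k : ℤ, Submodule R (Mod k))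
    (hSd : ∀ k, Submodule.map (d k) (S k) ≤ S (k + 1))
    (hS₂d : ∀ k, Submodule.map (d k) (S₂ k) ≤ S₂ (k + 1))
    (hTd : ∀ k, Submodule.map (d k) (T k) ≤ T (k + 1))
    (hSsummand : ∀ k, ∃ C : Submodule R (Mod k), IsCompl (S k) C)
    (hdecomp : ∀ k, S₂ k ⊓ T k = ⊥ ∧ S₂ k ⊔ T k = S k)
    (n₀ : ℤ) (hTzero : ∀ k, k ≠ n₀ → k ≠ n₀ + 1 → T k = ⊥)
    (hTonto : Submodule.map (d n₀) (T n₀) = T (n₀ + 1))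
    (hTinj : ∀ x ∈ T n₀, d n₀ x = 0 → x = 0) :
    ∃ (E' T' : ∀ k : ℤ, Submodule R (Mod k)) (f : ∀ k : ℤ, Mod k →ₗ[R] Mod k),
      (∀ k, Submodule.map (d k) (E' k) ≤ E' (k + 1)) ∧
      (∀ k, Submodule.map (d k) (T' k) ≤ T' (k + 1)) ∧
      (∀ k, IsCompl (E' k) (T' k)) ∧
      (∀ k, S₂ k ≤ E' k) ∧
      (∀ k, Submodule.map (f k) (T' k) = T k) ∧
      (∀ k, ∀ x ∈ T' k, f k x = 0 → x = 0) ∧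
      (∀ k, ∀ x ∈ T' k, f (k + 1) (d k x) = d k (f k x)) := by

  classical
  choose C hC using hSsummand
  have hTS : ∀ k, T k ≤ S k := fun k => (hdecomp k).2 ▸ le_sup_right
  have hS₂S : ∀ k, S₂ k ≤ S k := fun k => (hdecomp k).2 ▸ le_sup_left
  set W : ∀ k : ℤ, Submodule R (Mod k) := fun k => S₂ k ⊔ C k with hWdef
  have hWdisj : ∀ k, ∀ x, x ∈ W k → x ∈ T k → x = 0 := by
    intro k x hxW hxT
    rcases Submodule.mem_sup.mp hxW with ⟨s, hs, c, hc, rfl⟩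
    have hcS : c ∈ S k := by
      have h2 : (s + c) - s ∈ S k := Submodule.sub_mem _ (hTS k hxT) (hS₂S k hs)
      simpa using h2
    have hc0 : c = 0 := (Submodule.disjoint_def.mp (hC k).disjoint) c hcS hc
    subst hc0
    have hmem : s ∈ S₂ k ⊓ T k := ⟨hs, by simpa using hxT⟩
    rw [(hdecomp k).1] at hmem
    simpa using hmem
  have hWsup : ∀ k, W k ⊔ T k = ⊤ := by
    intro k
    have h1 : W k ⊔ T k = (S₂ k ⊔ T k) ⊔ C k := by
      simp only [hWdef]
      rw [sup_assoc, sup_comm (C k) (T k), ← sup_assoc]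
    rw [h1, (hdecomp k).2]
    exact (hC k).sup_eq_top
  set U : ∀ k : ℤ, Submodule R (Mod k) := fun k => if k = n₀ + 1 then W k else ⊤ with hUdef
  have hS₂U : ∀ k, S₂ k ≤ U k := by
    intro k
    simp only [hUdef]
    split
    · exact le_sup_left
    · exact le_top
  set E' : ∀ k : ℤ, Submodule R (Mod k) :=
    fun k => U k ⊓ Submodule.comap (d k) (U (k + 1)) with hE'def
  refine ⟨E', T, fun k => LinearMap.id, ?_, hTd, ?_, ?_, ?_, ?_, ?_⟩
  · -- E' is a subcomplex
    intro k y hy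
    rcases Submodule.mem_map.mp hy with ⟨x, hx, rfl⟩
    refine ⟨hx.2, ?_⟩
    show d (k + 1) (d k x) ∈ U (k + 1 + 1)
    rw [hdd]
    exact Submodule.zero_mem _
  · -- IsCompl
    intro k
    by_cases hk0 : k = n₀
    · subst hk0
      have hUk : U k = ⊤ := by simp only [hUdef]; rw [if_neg (by omega)]
      have hUk1 : U (k + 1) = W (k + 1) := by simp only [hUdef]; simp
      rw [isCompl_iff]
      constructor
      · rw [Submodule.disjoint_def]
        intro x hxE hxT
        have hdx : d k x ∈ W (k + 1) := by
          have h2 : d k x ∈ U (k + 1) := hxE.2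
          rwa [hUk1] at h2
        have hdxT : d k x ∈ T (k + 1) := hTd k (Submodule.mem_map_of_mem hxT)
        exact hTinj x hxT (hWdisj (k + 1) _ hdx hdxT)
      · rw [codisjoint_iff, eq_top_iff]
        intro x _
        have hdx : d k x ∈ W (k + 1) ⊔ T (k + 1) := by rw [hWsup]; trivial
        rcases Submodule.mem_sup.mp hdx with ⟨w, hw, t, ht, hwt⟩
        rw [← hTonto] at ht
        rcases Submodule.mem_map.mp ht with ⟨s, hs, rfl⟩
        refine Submodule.mem_sup.mpr ⟨x - s, ⟨?_, ?_⟩, s, hs, by abel⟩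
        · rw [hUk]; trivial
        · show d k (x - s) ∈ U (k + 1)
          rw [hUk1, map_sub]
          have : d k x - d k s = w := by rw [← hwt]; abel
          rw [this]
          exact hw
    · by_cases hk1 : k = n₀ + 1
      · subst hk1
        have hUk : U (n₀ + 1) = W (n₀ + 1) := by simp only [hUdef]; simp
        have hUk1 : U (n₀ + 1 + 1) = ⊤ := by simp only [hUdef]; rw [if_neg (by omega)]
        have hE : E' (n₀ + 1) = W (n₀ + 1) := by
          simp only [hE'def, hUk, hUk1, Submodule.comap_top, inf_top_eq]
        rw [hE, isCompl_iff]
        constructor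
        · rw [Submodule.disjoint_def]
          exact hWdisj (n₀ + 1)
        · rw [codisjoint_iff]
          exact hWsup (n₀ + 1)
      · have hT : T k = ⊥ := hTzero k hk0 hk1
        have hUk : U k = ⊤ := by simp only [hUdef]; rw [if_neg hk1]
        have hUk1 : U (k + 1) = ⊤ := by simp only [hUdef]; rw [if_neg (by omega)]
        have hE : E' k = ⊤ := by
          simp only [hE'def, hUk, hUk1, Submodule.comap_top, inf_top_eq]
        rw [hE, hT]
        exact isCompl_top_bot
  · -- S₂ ≤ E'
    intro k x hx
    refine ⟨hS₂U k hx, ?_⟩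
    show d k x ∈ U (k + 1)
    exact hS₂U (k + 1) (hS₂d k (Submodule.mem_map_of_mem hx))
  · intro k
    exact Submodule.map_id _
  · intro k x _ h
    simpa using h
  · intro k x _
    rfl
end

section
/- If the Young tableau/partition shape corresponding to a path μ ∈ Λ_{n,i} has at most 2 rows, then every type-1 Dyck partition P ∈ Conf¹(λ,μ) (for any λ ≤ μ) contains at most one Dyck strip of length greater than 1, and consequently there exist no P, Q ∈ Conf¹(λ,μ) with P ≻ Q and |P| = |Q|. -/
open scoped Classical

noncomputable section

/-- The simple transposition `s_j` of `S_n` (0-indexed: it swaps positions `j` and `j+1`). -/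
def sT (n j : ℕ) : Equiv.Perm (Fin n) :=
  if h : j + 1 < n then Equiv.swap ⟨j, Nat.lt_of_succ_lt h⟩ ⟨j + 1, h⟩ else 1

/-- The Coxeter length of a permutation, as its number of inversions. -/
def invLen {n : ℕ} (w : Equiv.Perm (Fin n)) : ℕ :=
  (Finset.univ.filter fun p : Fin n × Fin n => p.1 < p.2 ∧ w p.2 < w p.1).card

/-- The parabolic subgroup `W_I ≅ S_i × S_{n-i}` generated by all simple transpositions
except the `i`-th one (1-indexed: we exclude `s_i`, i.e. the 0-indexed `sT n (i-1)`). -/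
def WIsub (n i : ℕ) : Subgroup (Equiv.Perm (Fin n)) :=
  Subgroup.closure {g | ∃ m : ℕ, m + 1 < n ∧ m + 1 ≠ i ∧ g = sT n m}

/-- `W^I`: the minimal length representatives of the cosets `w W_I`. -/
def minRep (n i : ℕ) : Set (Equiv.Perm (Fin n)) :=
  {w | ∀ m : ℕ, m + 1 < n → m + 1 ≠ i → invLen w < invLen (w * sT n m)}

/-- The path `λ^w = w · (↘,…,↘,↗,…,↗)` associated to `w`; `true` encodes `↘`,
`false` encodes `↗`; the symmetric group permutes positions. -/
def toPath {n : ℕ} (i : ℕ) (w : Equiv.Perm (Fin n)) : Fin n → Bool :=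
  fun k => decide (((w⁻¹ k : Fin n) : ℕ) < i)

/-- `Λ_{n,i}`: the set of `n`-tuples of `↗`/`↘` with exactly `i` entries `↘`. -/
def pathSet (n i : ℕ) : Set (Fin n → Bool) :=
  {lam | (Finset.univ.filter fun k => lam k = true).card = i}

/-- The height of the lattice path of `λ` at horizontal coordinate `j`
(the path starts at `(0,i)`; `↘` is a down-step, `↗` an up-step). -/
def hgt {n : ℕ} (i : ℕ) (lam : Fin n → Bool) (j : ℕ) : ℤ :=
  (i : ℤ) + ∑ k ∈ Finset.univ.filter (fun k : Fin n => (k : ℕ) < j),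
      (if lam k then (-1 : ℤ) else 1)

/-- `λ ≤ μ`: the path `λ` lies weakly below the path `μ`. -/
def pathLE {n : ℕ} (i : ℕ) (lam mu : Fin n → Bool) : Prop :=
  ∀ j ≤ n, hgt i lam j ≤ hgt i mu j

/-- Bruhat order on `S_n`: generated by `a < t·a` for transpositions `t`
with strictly increasing length. -/
def bruhatLE {n : ℕ} (u v : Equiv.Perm (Fin n)) : Prop :=
  Relation.ReflTransGen
    (fun a b => (∃ x y : Fin n, x ≠ y ∧ b = Equiv.swap x y * a) ∧ invLen a < invLen b) u v

/-- A Dyck strip of height `h`: the set of boxes (recorded by their centers) centered at the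
integral points of a Dyck path from `(x₀,h)` to `(x₀+2l,h)` staying weakly below height `h`. -/
def IsDyckStrip (D : Finset (ℤ × ℤ)) (h : ℤ) : Prop :=
  ∃ (x₀ : ℤ) (l : ℕ) (d : ℕ → ℤ),
    d 0 = 0 ∧ d (2 * l) = 0 ∧
    (∀ k < 2 * l, d (k + 1) = d k + 1 ∨ d (k + 1) = d k - 1) ∧
    (∀ k ≤ 2 * l, d k ≤ 0) ∧
    D = (Finset.range (2 * l + 1)).image fun k : ℕ => (x₀ + (k : ℤ), h + d k)

/-- The region `A(λ,μ)` between two paths `λ ≤ μ`, as the set of centers of the boxes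
lying strictly between the two lattice paths. -/
def region {n : ℕ} (i : ℕ) (lam mu : Fin n → Bool) : Set (ℤ × ℤ) :=
  {b | 0 ≤ b.1 ∧ b.1 ≤ (n : ℤ) ∧ Odd (b.1 + b.2 + (i : ℤ)) ∧
    hgt i lam b.1.toNat < b.2 ∧ b.2 < hgt i mu b.1.toNat}

/-- A Dyck partition of a region `A`: a partition of the boxes of `A` into Dyck strips. -/
def IsDyckPartition (P : Finset (Finset (ℤ × ℤ))) (A : Set (ℤ × ℤ)) : Prop :=
  (∀ D ∈ P, ∃ h, IsDyckStrip D h) ∧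
  (∀ D ∈ P, ∀ D' ∈ P, D ≠ D' → Disjoint D D') ∧
  (⋃ D ∈ P, (D : Set (ℤ × ℤ))) = A

/-- Type 1 condition: if some strip `D'` contains a box just above a box of `D`, then every box
just above a box of `D` is in `D'`. -/
def IsType1 (P : Finset (Finset (ℤ × ℤ))) : Prop :=
  ∀ D ∈ P, ∀ D' ∈ P, D ≠ D' → (∃ b ∈ D, (b.1, b.2 + 2) ∈ D') →
    ∀ b ∈ D, (b.1, b.2 + 2) ∈ D'

/-- The boxes just below, SW and SE of a box `b`. -/
def belowBoxes (b : ℤ × ℤ) : Finset (ℤ × ℤ) :=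
  {(b.1, b.2 - 2), (b.1 - 1, b.2 - 1), (b.1 + 1, b.2 - 1)}

/-- Type 2 condition: if some strip `D'` contains a box just below, SW or SE of a box of `D`,
then every box just below, SW or SE of a box of `D` belongs to `D` or `D'`. -/
def IsType2 (P : Finset (Finset (ℤ × ℤ))) : Prop :=
  ∀ D ∈ P, ∀ D' ∈ P, D ≠ D' → (∃ b ∈ D, ∃ c ∈ belowBoxes b, c ∈ D') →
    ∀ b ∈ D, ∀ c ∈ belowBoxes b, c ∈ D ∨ c ∈ D'

/-- `Conf¹(λ,μ)`: the set of type-1 Dyck partitions of the region `A(λ,μ)`. -/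
def Conf1 {n : ℕ} (i : ℕ) (lam mu : Fin n → Bool) : Set (Finset (Finset (ℤ × ℤ))) :=
  {P | IsDyckPartition P (region i lam mu) ∧ IsType1 P}

/-- `Conf²(λ,μ)`: the set of type-2 Dyck partitions of the region `A(λ,μ)`. -/
def Conf2 {n : ℕ} (i : ℕ) (lam mu : Fin n → Bool) : Set (Finset (Finset (ℤ × ℤ))) :=
  {P | IsDyckPartition P (region i lam mu) ∧ IsType2 P}

/-- The height of a Dyck strip (the largest `y`-coordinate of one of its boxes). -/
def stripHeight (D : Finset (ℤ × ℤ)) : ℤ := WithBot.unbotD 0 ((D.image Prod.snd).max)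

/-- Two Dyck strips are distant if no box of one is just above or just below a box of the other. -/
def Distant (D C : Finset (ℤ × ℤ)) : Prop :=
  ∀ b ∈ D, (b.1, b.2 + 2) ∉ C ∧ (b.1, b.2 - 2) ∉ C

/-- The order relation `P ≻ Q` on Dyck partitions. -/
def DPsucc (P Q : Finset (Finset (ℤ × ℤ))) : Prop :=
  ∃ h : ℤ, 0 < h ∧
    (∀ j : ℤ, h < j →
      P.filter (fun D => stripHeight D = j) = Q.filter (fun D => stripHeight D = j)) ∧
    P.filter (fun D => stripHeight D = h) ≠ Q.filter (fun D => stripHeight D = h) ∧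
    (∀ D ∈ P.filter (fun D => stripHeight D = h),
      ∃ D' ∈ Q.filter (fun D => stripHeight D = h), D ⊆ D')

section TwoRowsAux
open Finset
def dnsF (n : ℕ) (ν : Fin n → Bool) (x : ℕ) : ℕ :=
  (Finset.univ.filter fun k : Fin n => (k : ℕ) < x ∧ ν k = true).card

def rowsF (n : ℕ) (ν : Fin n → Bool) : ℕ :=
  (Finset.univ.filter fun k : Fin n =>
    ν k = true ∧ ∃ k' : Fin n, k' < k ∧ ν k' = false).card

lemma card_filter_lt (n m : ℕ) (h : m ≤ n) :
    (Finset.univ.filter fun k : Fin n => (k : ℕ) < m).card = m := by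
  induction m with
  | zero => simp
  | succ m ih =>
    have hm : m < n := h
    have hins : (Finset.univ.filter fun k : Fin n => (k : ℕ) < m + 1)
        = insert ⟨m, hm⟩ (Finset.univ.filter fun k : Fin n => (k : ℕ) < m) := by
      ext k
      simp only [Finset.mem_filter, Finset.mem_univ, true_and, Finset.mem_insert, Fin.ext_iff]
      omega
    rw [hins, Finset.card_insert_of_notMem (by simp), ih (le_of_lt hm)]

lemma dnsF_le (n : ℕ) (ν : Fin n → Bool) (x : ℕ) (hx : x ≤ n) : dnsF n ν x ≤ x := by
  have := Finset.card_le_card (s := Finset.univ.filter fun k : Fin n => (k : ℕ) < x ∧ ν k = true)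
    (t := Finset.univ.filter fun k : Fin n => (k : ℕ) < x)
    (by intro k hk; simp only [Finset.mem_filter] at *; exact ⟨hk.1, hk.2.1⟩)
  rwa [card_filter_lt n x hx] at this

lemma dnsF_le_i {n i : ℕ} {ν : Fin n → Bool} (hν : ν ∈ pathSet n i) (x : ℕ) :
    dnsF n ν x ≤ i := by
  have := Finset.card_le_card (s := Finset.univ.filter fun k : Fin n => (k : ℕ) < x ∧ ν k = true)
    (t := Finset.univ.filter fun k : Fin n => ν k = true)
    (by intro k hk; simp only [Finset.mem_filter] at *; exact ⟨hk.1, hk.2.2⟩)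
  rwa [hν] at this

lemma hgt_formula (n i : ℕ) (ν : Fin n → Bool) (x : ℕ) (hx : x ≤ n) :
    hgt i ν x = (i : ℤ) + x - 2 * dnsF n ν x := by
  unfold hgt dnsF
  have h1 : ∀ k : Fin n, (if ν k then (-1 : ℤ) else 1) =
      1 - 2 * (if ν k = true then (1 : ℤ) else 0) := by
    intro k; by_cases hk : ν k = true <;> simp [hk]
  rw [Finset.sum_congr rfl (fun k _ => h1 k), Finset.sum_sub_distrib, Finset.sum_const,
    ← Finset.mul_sum, Finset.sum_boole, Finset.filter_filter, card_filter_lt n x hx]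
  ring

lemma dns_split {n i : ℕ} {ν : Fin n → Bool} (hν : ν ∈ pathSet n i) (x : ℕ) :
    dnsF n ν x +
      (Finset.univ.filter fun k : Fin n => ν k = true ∧ ¬ (k : ℕ) < x).card = i := by
  have h1 : (Finset.univ.filter fun k : Fin n => (k : ℕ) < x ∧ ν k = true)
      = (Finset.univ.filter fun k : Fin n => ν k = true ∧ (k : ℕ) < x) := by
    ext k; simp only [Finset.mem_filter]; tauto
  have h2 := Finset.card_filter_add_card_filter_not
    (s := Finset.univ.filter fun k : Fin n => ν k = true)
    (p := fun k : Fin n => (k : ℕ) < x)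
  rw [Finset.filter_filter, Finset.filter_filter] at h2
  rw [hν] at h2
  unfold dnsF
  rw [h1]
  convert h2 using 3

lemma exists_up {n i : ℕ} {ν : Fin n → Bool} (x : ℕ) (hx : x ≤ n)
    (hd : dnsF n ν x < x) : ∃ k₀ : Fin n, (k₀ : ℕ) < x ∧ ν k₀ = false := by
  have hns : ¬ (Finset.univ.filter fun k : Fin n => (k : ℕ) < x)
      ⊆ (Finset.univ.filter fun k : Fin n => (k : ℕ) < x ∧ ν k = true) := by
    intro hsub
    have := Finset.card_le_card hsub
    rw [card_filter_lt n x hx] at this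
    unfold dnsF at hd
    omega
  obtain ⟨k₀, hk₀mem, hk₀not⟩ := Finset.not_subset.mp hns
  simp only [Finset.mem_filter, Finset.mem_univ, true_and] at hk₀mem hk₀not
  refine ⟨k₀, hk₀mem, ?_⟩
  rcases Bool.eq_false_or_eq_true (ν k₀) with hb | hb
  · exact absurd ⟨hk₀mem, hb⟩ hk₀not
  · exact hb

lemma lemM {n i : ℕ} {ν : Fin n → Bool} (hν : ν ∈ pathSet n i) (x : ℕ) (hx : x ≤ n)
    (hd : dnsF n ν x < x) : i ≤ rowsF n ν + dnsF n ν x := by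
  obtain ⟨k₀, hk₀x, hk₀f⟩ := exists_up (i := i) x hx hd
  have hT : (Finset.univ.filter fun k : Fin n => ν k = true ∧ ¬ (k : ℕ) < x)
      ⊆ (Finset.univ.filter fun k : Fin n =>
        ν k = true ∧ ∃ k' : Fin n, k' < k ∧ ν k' = false) := by
    intro k hk
    simp only [Finset.mem_filter, Finset.mem_univ, true_and] at hk ⊢
    refine ⟨hk.1, k₀, ?_, hk₀f⟩
    have h2 := hk.2
    have : (k₀ : ℕ) < (k : ℕ) := by omega
    exact this
  have h3 : (Finset.univ.filter fun k : Fin n => ν k = true ∧ ¬ (k : ℕ) < x).card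
      ≤ rowsF n ν := Finset.card_le_card hT
  have hsplit := dns_split hν x
  omega

lemma lemM2 {n i : ℕ} {ν : Fin n → Bool} (hν : ν ∈ pathSet n i) (x : ℕ) (hx : x ≤ n)
    (hd : dnsF n ν x < x)
    (hextra : ∃ k : Fin n, (k : ℕ) < x ∧ ν k = true ∧ ∃ k' : Fin n, k' < k ∧ ν k' = false) :
    i + 1 ≤ rowsF n ν + dnsF n ν x := by
  obtain ⟨k, hkx, hkt, hwit⟩ := hextra
  obtain ⟨k₀, hk₀x, hk₀f⟩ := exists_up (i := i) x hx hd
  have hT : insert k (Finset.univ.filter fun k : Fin n => ν k = true ∧ ¬ (k : ℕ) < x)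
      ⊆ (Finset.univ.filter fun k : Fin n =>
        ν k = true ∧ ∃ k' : Fin n, k' < k ∧ ν k' = false) := by
    intro c hc
    rcases Finset.mem_insert.mp hc with rfl | hc
    · simp only [Finset.mem_filter, Finset.mem_univ, true_and]; exact ⟨hkt, hwit⟩
    · simp only [Finset.mem_filter, Finset.mem_univ, true_and] at hc ⊢
      refine ⟨hc.1, k₀, ?_, hk₀f⟩
      have h2 := hc.2
      have : (k₀ : ℕ) < (c : ℕ) := by omega
      exact this
  have h3 : (insert k (Finset.univ.filter fun k : Fin n =>
      ν k = true ∧ ¬ (k : ℕ) < x)).card ≤ rowsF n ν := Finset.card_le_card hT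
  rw [Finset.card_insert_of_notMem (by simp [hkx])] at h3
  have hsplit := dns_split hν x
  omega
lemma bool_false_of_ne_true {b : Bool} (h : ¬ b = true) : b = false := by
  rcases Bool.eq_false_or_eq_true b with hb | hb
  · exact absurd hb h
  · exact hb

lemma key3 {n i : ℕ} {mu lam : Fin n → Bool} (hmu : mu ∈ pathSet n i)
    (hR : rowsF n mu ≤ 2) (x : ℕ) (hx : x ≤ n) (hix : i ≤ x)
    (hbox : ((x : ℤ), (x : ℤ) - i + 3) ∈ region i lam mu) :
    2 ≤ i ∧ ∀ j : ℕ, j ≤ x →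
      ((i : ℤ) - 2 ≤ (j : ℤ) → hgt i mu j = (j : ℤ) - i + 4) ∧
      ((j : ℤ) ≤ (i : ℤ) - 2 → hgt i mu j = (i : ℤ) - j) := by
  obtain ⟨h0, hn, hodd, hfy, hyg⟩ := hbox
  simp only [Int.toNat_natCast] at hfy hyg
  have hg := hgt_formula n i mu x hx
  have hdle : dnsF n mu x ≤ x := dnsF_le n mu x hx
  have hd2 : (dnsF n mu x : ℤ) ≤ (i : ℤ) - 2 := by omega
  have h2i : 2 ≤ i := by omega
  have hdx : dnsF n mu x < x := by omega
  have hM := lemM hmu x hx hdx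
  have hde : dnsF n mu x = i - 2 := by omega
  have hprefix : ∀ k : Fin n, (k : ℕ) < x → mu k = true →
      ∀ k' : Fin n, k' < k → mu k' = true := by
    intro k hkx hkt k' hk'
    by_contra hcon
    have hf : mu k' = false := bool_false_of_ne_true hcon
    have := lemM2 hmu x hx hdx ⟨k, hkx, hkt, k', hk', hf⟩
    omega
  have hchar : ∀ k : Fin n, ((k : ℕ) < x ∧ mu k = true) ↔ (k : ℕ) < i - 2 := by
    intro k
    constructor
    · rintro ⟨hkx, hkt⟩
      by_contra hge
      push_neg at hge
      have hsub : (Finset.univ.filter fun k' : Fin n => (k' : ℕ) < (k : ℕ) + 1)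
          ⊆ (Finset.univ.filter fun k' : Fin n => (k' : ℕ) < x ∧ mu k' = true) := by
        intro k' hk'
        simp only [Finset.mem_filter, Finset.mem_univ, true_and] at hk' ⊢
        rcases Nat.lt_succ_iff_lt_or_eq.mp hk' with h | h
        · exact ⟨by omega, hprefix k hkx hkt k' (Fin.lt_def.mpr h)⟩
        · have hek : k' = k := Fin.ext h
          subst hek
          exact ⟨hkx, hkt⟩
      have hc : (k : ℕ) + 1 ≤ dnsF n mu x := by
        have := Finset.card_le_card hsub
        rwa [card_filter_lt n ((k : ℕ) + 1) (by omega)] at this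
      omega
    · intro hki2
      have hkx : (k : ℕ) < x := by omega
      refine ⟨hkx, ?_⟩
      by_contra hcon
      have hkf : mu k = false := bool_false_of_ne_true hcon
      have hsub : (Finset.univ.filter fun k' : Fin n => (k' : ℕ) < x ∧ mu k' = true)
          ⊆ (Finset.univ.filter fun k' : Fin n => (k' : ℕ) < (k : ℕ)) := by
        intro k'' hk''
        simp only [Finset.mem_filter, Finset.mem_univ, true_and] at hk'' ⊢
        by_contra hge2
        push_neg at hge2
        rcases eq_or_lt_of_le hge2 with heq | hlt
        · have : k'' = k := Fin.ext heq.symm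
          subst this
          rw [hk''.2] at hkf
          simp at hkf
        · have : mu k = true := hprefix k'' hk''.1 hk''.2 k (Fin.lt_def.mpr hlt)
          rw [this] at hkf
          simp at hkf
      have hc : dnsF n mu x ≤ (k : ℕ) := by
        have := Finset.card_le_card hsub
        rwa [card_filter_lt n (k : ℕ) (le_of_lt k.2)] at this
      omega
  have hdnsj : ∀ j : ℕ, j ≤ x → dnsF n mu j = min j (i - 2) := by
    intro j hj
    have hset : (Finset.univ.filter fun k : Fin n => (k : ℕ) < j ∧ mu k = true)
        = (Finset.univ.filter fun k : Fin n => (k : ℕ) < min j (i - 2)) := by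
      ext k
      simp only [Finset.mem_filter, Finset.mem_univ, true_and]
      constructor
      · rintro ⟨h1, h2⟩
        have := (hchar k).mp ⟨by omega, h2⟩
        omega
      · intro h
        have h2 := (hchar k).mpr (by omega)
        exact ⟨by omega, h2.2⟩
    unfold dnsF
    rw [hset, card_filter_lt n _ (by omega)]
  refine ⟨h2i, fun j hj => ⟨?_, ?_⟩⟩ <;> intro hcase <;>
  · have hgj := hgt_formula n i mu j (le_trans hj hx)
    have hv := hdnsj j hj
    omega
lemma regionBox {n i : ℕ} {mu lam : Fin n → Bool} (hmu : mu ∈ pathSet n i)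
    (hlam : lam ∈ pathSet n i) (hR : rowsF n mu ≤ 2) (b : ℤ × ℤ)
    (hb : b ∈ region i lam mu) :
    1 ≤ b.1 ∧ b.1 ≤ (n : ℤ) ∧ (i : ℤ) - 1 ≤ b.1 ∧
      (b.1 = (i : ℤ) - 1 → b.2 = 2) ∧
      ((i : ℤ) ≤ b.1 → b.2 = b.1 - i + 1 ∨ b.2 = b.1 - i + 3) := by
  obtain ⟨h0, hn, hodd, hfy, hyg⟩ := hb
  obtain ⟨t, ht⟩ := hodd
  have hj : ((b.1.toNat : ℤ)) = b.1 := Int.toNat_of_nonneg h0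
  set j := b.1.toNat with hjdef
  have hjn : j ≤ n := by omega
  have hgf := hgt_formula n i mu j hjn
  have hff := hgt_formula n i lam j hjn
  have hdLj := dnsF_le n lam j hjn
  have hdLi := dnsF_le_i hlam j
  have hdMj := dnsF_le n mu j hjn
  have hdMi := dnsF_le_i hmu j
  have hj1 : 1 ≤ j := by
    by_contra hcon
    have hj0 : j = 0 := by omega
    rw [hj0] at hgf hff hfy hyg hj
    have h1 := dnsF_le n mu 0 (by omega)
    have h2 := dnsF_le n lam 0 (by omega)
    omega
  have hA : (i : ℤ) - 1 ≤ b.1 := by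
    by_contra hcon
    push_neg at hcon
    have hdM : dnsF n mu j < j := by omega
    have := lemM hmu j hjn hdM
    omega
  refine ⟨by omega, hn, hA, ?_, ?_⟩
  · intro hB
    by_contra hy2
    have hdM : dnsF n mu j < j := by omega
    have := lemM hmu j hjn hdM
    omega
  · intro hC
    by_contra hy
    push_neg at hy
    have hdM : dnsF n mu j < j := by omega
    have := lemM hmu j hjn hdM
    omega
def tri (a h : ℤ) : Finset (ℤ × ℤ) := {(a, h), (a + 1, h - 1), (a + 2, h)}

lemma mem_tri {b : ℤ × ℤ} {a h : ℤ} :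
    b ∈ tri a h ↔ b = (a, h) ∨ b = (a + 1, h - 1) ∨ b = (a + 2, h) := by
  simp [tri]

lemma tri_card (a h : ℤ) : (tri a h).card = 3 := by
  unfold tri
  rw [Finset.card_insert_of_notMem, Finset.card_insert_of_notMem, Finset.card_singleton]
  · simp only [Finset.mem_singleton, Prod.ext_iff, not_and]
    intro h1
    omega
  · simp only [Finset.mem_insert, Finset.mem_singleton, Prod.ext_iff, not_or, not_and]
    constructor <;> intro h1 <;> omega

lemma image3_eq (f : ℕ → ℤ × ℤ) : (Finset.range 3).image f = {f 0, f 1, f 2} := by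
  ext b
  simp only [Finset.mem_image, Finset.mem_range, Finset.mem_insert, Finset.mem_singleton]
  constructor
  · rintro ⟨k, hk, rfl⟩
    interval_cases k <;> simp
  · rintro (rfl | rfl | rfl)
    exacts [⟨0, by omega, rfl⟩, ⟨1, by omega, rfl⟩, ⟨2, by omega, rfl⟩]

lemma strip_nonempty {D : Finset (ℤ × ℤ)} {hh : ℤ} (hD : IsDyckStrip D hh) : D.Nonempty := by
  obtain ⟨x₀, l, d, hd0, hd2l, hstep, hneg, hDeq⟩ := hD
  rw [hDeq]
  exact Finset.Nonempty.image ⟨0, Finset.mem_range.mpr (by omega)⟩ _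

lemma strip_classify' {n i : ℕ} {mu lam : Fin n → Bool} (hmu : mu ∈ pathSet n i)
    (hlam : lam ∈ pathSet n i) (hR : rowsF n mu ≤ 2) {D : Finset (ℤ × ℤ)} {hh : ℤ}
    (hD : IsDyckStrip D hh) (hsub : ∀ b ∈ D, b ∈ region i lam mu) (hcard : 1 < D.card) :
    ∃ a : ℤ, D = tri a hh ∧
      ((a = (i : ℤ) - 1 ∧ hh = 2) ∨ ((i : ℤ) ≤ a ∧ hh = a - (i : ℤ) + 3)) := by
  obtain ⟨x₀, l, d, hd0, hd2l, hstep, hneg, hDeq⟩ := hD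
  have hmem : ∀ k, k ≤ 2 * l → (x₀ + (k : ℤ), hh + d k) ∈ D := by
    intro k hk
    rw [hDeq]
    exact Finset.mem_image_of_mem _ (Finset.mem_range.mpr (by omega))
  have hl1 : 1 ≤ l := by
    by_contra hcon
    have hl0 : l = 0 := by omega
    have : D.card ≤ 1 := by
      rw [hDeq, hl0]
      exact le_trans Finset.card_image_le (by simp)
    omega
  have hd1 : d 1 = -1 := by
    have h1 := hneg 1 (by omega)
    rcases hstep 0 (by omega) with h | h <;> norm_num at h <;> omega
  have hm0 : (x₀, hh) ∈ D := by
    have := hmem 0 (by omega)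
    rw [hd0] at this
    simpa using this
  have hm1 : (x₀ + 1, hh - 1) ∈ D := by
    have := hmem 1 (by omega)
    rw [hd1] at this
    have he : (x₀ + ((1 : ℕ) : ℤ), hh + (-1)) = (x₀ + 1, hh - 1) := by
      simp [Prod.ext_iff]; ring
    rwa [he] at this
  have hb0 := regionBox hmu hlam hR _ (hsub _ hm0)
  have hb1 := regionBox hmu hlam hR _ (hsub _ hm1)
  simp only at hb0 hb1
  have hwing : (x₀ = (i : ℤ) - 1 ∧ hh = 2) ∨ ((i : ℤ) ≤ x₀ ∧ hh = x₀ - (i : ℤ) + 3) := by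
    by_cases hx0 : x₀ = (i : ℤ) - 1
    · exact Or.inl ⟨hx0, hb0.2.2.2.1 hx0⟩
    · have hix : (i : ℤ) ≤ x₀ := by
        have := hb0.2.2.1
        omega
      have h1 := hb0.2.2.2.2 hix
      have h2 := hb1.2.2.2.2 (by omega)
      exact Or.inr ⟨hix, by omega⟩
  have hl : l = 1 := by
    by_contra hcon
    have hl2 : 2 ≤ l := by omega
    have hd2v : d 2 = 0 ∨ d 2 = -2 := by
      rcases hstep 1 (by omega) with h | h <;> norm_num at h <;> omega
    have hb2 := regionBox hmu hlam hR _ (hsub _ (hmem 2 (by omega)))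
    simp only at hb2
    have hy2 := hb2.2.2.2.2 (by push_cast; omega)
    push_cast at hy2
    have hd2 : d 2 = 0 := by omega
    have hd3 : d 3 = -1 := by
      have h1 := hneg 3 (by omega)
      rcases hstep 2 (by omega) with h | h <;> norm_num at h <;> omega
    have hb3 := regionBox hmu hlam hR _ (hsub _ (hmem 3 (by omega)))
    simp only at hb3
    have hy3 := hb3.2.2.2.2 (by push_cast; omega)
    push_cast at hy3
    omega
  have hd2 : d 2 = 0 := by
    rw [hl] at hd2l
    simpa using hd2l
  refine ⟨x₀, ?_, hwing⟩
  rw [hDeq, hl]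
  have hr3 : 2 * 1 + 1 = 3 := by norm_num
  rw [hr3, image3_eq]
  unfold tri
  ext b
  simp only [Finset.mem_insert, Finset.mem_singleton, Prod.ext_iff]
  push_cast
  rw [hd0, hd1, hd2]
  constructor <;> intro hc <;> omega
lemma mem_region {n i : ℕ} {lam mu : Fin n → Bool} {x y : ℤ} :
    ((x, y) ∈ region i lam mu) ↔ 0 ≤ x ∧ x ≤ (n : ℤ) ∧ Odd (x + y + i) ∧
      hgt i lam x.toNat < y ∧ y < hgt i mu x.toNat := Iff.rfl

lemma sh_eq_of {D : Finset (ℤ × ℤ)} {b : ℤ × ℤ} (hb : b ∈ D)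
    (htop : ∀ c ∈ D, c.2 ≤ b.2) : stripHeight D = b.2 := by
  have h1 : (b.2 : WithBot ℤ) ≤ (D.image Prod.snd).max :=
    Finset.le_max (Finset.mem_image_of_mem _ hb)
  have h2 : (D.image Prod.snd).max ≤ (b.2 : WithBot ℤ) := by
    apply Finset.max_le
    intro y hy
    obtain ⟨c, hc, rfl⟩ := Finset.mem_image.mp hy
    exact_mod_cast htop c hc
  unfold stripHeight
  rw [le_antisymm h2 h1]
  rfl

lemma sh_tri (a h : ℤ) : stripHeight (tri a h) = h := by
  have : stripHeight (tri a h) = ((a, h) : ℤ × ℤ).2 := by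
    apply sh_eq_of (by simp [tri])
    intro c hc
    rcases mem_tri.mp hc with rfl | rfl | rfl <;> simp <;> omega
  simpa using this

lemma sh_singleton (b : ℤ × ℤ) : stripHeight {b} = b.2 := by
  apply sh_eq_of (Finset.mem_singleton_self b)
  intro c hc
  rw [Finset.mem_singleton.mp hc]

lemma le_sh_of_mem {D : Finset (ℤ × ℤ)} {b : ℤ × ℤ} (hb : b ∈ D) : b.2 ≤ stripHeight D := by
  have h1 := Finset.le_max (Finset.mem_image_of_mem Prod.snd hb)
  unfold stripHeight
  cases hmax : (D.image Prod.snd).max with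
  | bot => rw [hmax] at h1; exact absurd h1 (by simp)
  | coe m =>
    rw [hmax] at h1
    simpa using h1

lemma lemC {n i : ℕ} {mu lam : Fin n → Bool} {P : Finset (Finset (ℤ × ℤ))}
    (hP : P ∈ Conf1 i lam mu) {D : Finset (ℤ × ℤ)} (hDP : D ∈ P) {b : ℤ × ℤ} (hbD : b ∈ D)
    (habove : (b.1, b.2 + 2) ∈ region i lam mu) (hnotin : (b.1, b.2 + 2) ∉ D) :
    ∀ c ∈ D, (c.1, c.2 + 2) ∈ region i lam mu := by
  obtain ⟨⟨hstrips, hdisj, hcover⟩, htype1⟩ := hP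
  have hmem : (b.1, b.2 + 2) ∈ ⋃ D ∈ P, (D : Set (ℤ × ℤ)) := by rw [hcover]; exact habove
  obtain ⟨C, hCP, hmemC⟩ := Set.mem_iUnion₂.mp hmem
  have hne : D ≠ C := fun he => hnotin (he ▸ hmemC)
  have hall := htype1 D hDP C hCP hne ⟨b, hbD, hmemC⟩
  intro c hc
  have h2 := hall c hc
  rw [← hcover]
  exact Set.mem_biUnion hCP h2

lemma cover_sub {n i : ℕ} {mu lam : Fin n → Bool} {P : Finset (Finset (ℤ × ℤ))}
    (hP : P ∈ Conf1 i lam mu) {D : Finset (ℤ × ℤ)} (hDP : D ∈ P) :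
    ∀ b ∈ D, b ∈ region i lam mu := by
  intro b hb
  rw [← hP.1.2.2]
  exact Set.mem_biUnion hDP hb

lemma beta_struct {n i : ℕ} {mu lam : Fin n → Bool} (hmu : mu ∈ pathSet n i)
    (hlam : lam ∈ pathSet n i) (hR : rowsF n mu ≤ 2) {P : Finset (Finset (ℤ × ℤ))}
    (hP : P ∈ Conf1 i lam mu) {a : ℤ} (ha : (i : ℤ) ≤ a) (hi1 : 1 ≤ i)
    (hmem : tri a (a - (i : ℤ) + 3) ∈ P) :
    (∀ j : ℕ, (i : ℤ) - 2 ≤ (j : ℤ) → (j : ℤ) ≤ a → hgt i mu j = (j : ℤ) - i + 4) ∧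
      hgt i mu ((a + 1).toNat) = a - (i : ℤ) + 3 := by
  have hsub := cover_sub hP hmem
  have hr0 : (a, a - (i : ℤ) + 3) ∈ region i lam mu := hsub _ (by simp [tri])
  have hr1 : (a + 1, a - (i : ℤ) + 2) ∈ region i lam mu := by
    apply hsub
    apply mem_tri.mpr
    refine Or.inr (Or.inl ?_)
    simp only [Prod.ext_iff]
    exact ⟨trivial, by ring⟩
  have hr0' := mem_region.mp hr0
  have hr1' := mem_region.mp hr1
  have hxa : ((a.toNat : ℕ) : ℤ) = a := Int.toNat_of_nonneg (by omega)
  have hxn : a.toNat ≤ n := by omega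
  have hbox : (((a.toNat : ℕ) : ℤ), ((a.toNat : ℕ) : ℤ) - (i : ℤ) + 3) ∈ region i lam mu := by
    rw [hxa]; exact hr0
  obtain ⟨h2i, hkey⟩ := key3 hmu hR a.toNat hxn (by omega) hbox
  constructor
  · intro j hj1 hj2
    exact (hkey j (by omega)).1 (by omega)
  · -- the box just above the middle box is not in the region
    have hnot : (a + 1, a - (i : ℤ) + 4) ∉ region i lam mu := by
      intro hin
      have hnotin : ((a + 1 : ℤ), (a - (i : ℤ) + 2) + 2) ∉ tri a (a - (i : ℤ) + 3) := by
        simp only [mem_tri, Prod.ext_iff, not_or, not_and]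
        refine ⟨fun h1 => ?_, fun h1 => ?_, fun h1 => ?_⟩ <;> omega
      have hab : (((a + 1 : ℤ), (a - (i : ℤ) + 2)).1,
          ((a + 1 : ℤ), (a - (i : ℤ) + 2)).2 + 2) ∈ region i lam mu := by
        simp only
        convert hin using 2
        ring
      have hall := lemC hP hmem (b := (a + 1, a - (i : ℤ) + 2))
        (by apply mem_tri.mpr; refine Or.inr (Or.inl ?_); simp only [Prod.ext_iff];
            exact ⟨trivial, by ring⟩) hab (by simpa using hnotin)
      have htop := hall (a, a - (i : ℤ) + 3) (by simp [tri])
      have hbb := regionBox hmu hlam hR _ htop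
      simp only at hbb
      have := hbb.2.2.2.2 (by omega)
      omega
    have hj1c : (((a + 1).toNat : ℕ) : ℤ) = a + 1 := Int.toNat_of_nonneg (by omega)
    have hj1n : (a + 1).toNat ≤ n := by
      have := hr1'.2.1
      omega
    have hgf := hgt_formula n i mu ((a + 1).toNat) hj1n
    have hlow : a - (i : ℤ) + 2 < hgt i mu ((a + 1).toNat) := by
      have := hr1'.2.2.2.2
      simpa using this
    have hflow : hgt i lam ((a + 1).toNat) < a - (i : ℤ) + 2 := by
      have := hr1'.2.2.2.1
      simpa using this
    have hup : ¬ (a - (i : ℤ) + 4 < hgt i mu ((a + 1).toNat)) := by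
      intro hlt
      apply hnot
      refine mem_region.mpr ⟨by omega, by omega, ⟨a + 2, by ring⟩, by omega, hlt⟩
    omega
lemma alpha_contra {n i : ℕ} {mu lam : Fin n → Bool} (hmu : mu ∈ pathSet n i)
    (hlam : lam ∈ pathSet n i) (hR : rowsF n mu ≤ 2) (hi2 : i < n)
    {P : Finset (Finset (ℤ × ℤ))} (hP : P ∈ Conf1 i lam mu)
    (hmem : tri ((i : ℤ) - 1) 2 ∈ P) (hg4 : hgt i mu i = 4) : False := by
  have hsub := cover_sub hP hmem
  have hm1 : ((i : ℤ), 1) ∈ tri ((i : ℤ) - 1) 2 := by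
    apply mem_tri.mpr
    refine Or.inr (Or.inl ?_)
    simp only [Prod.ext_iff]
    constructor <;> ring
  have hr1' := mem_region.mp (hsub _ hm1)
  have hti : ((i : ℤ)).toNat = i := Int.toNat_natCast i
  rw [hti] at hr1'
  have hff := hgt_formula n i lam i (le_of_lt hi2)
  have hf0 : hgt i lam i = 0 := by
    have h1 := hr1'.2.2.2.1
    have h2 := dnsF_le_i hlam i
    omega
  have hmem3 : (((i : ℤ), 1).1, ((i : ℤ), 1).2 + 2) ∈ region i lam mu := by
    simp only
    refine mem_region.mpr ⟨by omega, by omega, ⟨(i : ℤ) + 1, by ring⟩, ?_, ?_⟩ <;>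
      rw [hti] <;> omega
  have hnotin : (((i : ℤ), 1).1, ((i : ℤ), 1).2 + 2) ∉ tri ((i : ℤ) - 1) 2 := by
    simp only [mem_tri, Prod.ext_iff, not_or, not_and]
    refine ⟨fun h1 => ?_, fun h1 => ?_, fun h1 => ?_⟩ <;> omega
  have hall := lemC hP hmem hm1 hmem3 hnotin
  have htop := hall ((i : ℤ) - 1, 2) (by simp [tri])
  have hbb := regionBox hmu hlam hR _ htop
  simp only at hbb
  have := hbb.2.2.2.1 trivial
  omega

/-- Cross-partition uniqueness of long strips. -/
lemma long_unique {n i : ℕ} {mu lam : Fin n → Bool} (hi1 : 1 ≤ i) (hi2 : i < n)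
    (hmu : mu ∈ pathSet n i) (hlam : lam ∈ pathSet n i) (hR : rowsF n mu ≤ 2)
    {P Q : Finset (Finset (ℤ × ℤ))} (hP : P ∈ Conf1 i lam mu) (hQ : Q ∈ Conf1 i lam mu)
    {D E : Finset (ℤ × ℤ)} (hDP : D ∈ P) (hEQ : E ∈ Q)
    (hDcard : 1 < D.card) (hEcard : 1 < E.card) : D = E := by
  obtain ⟨hhD, hDs⟩ := hP.1.1 D hDP
  obtain ⟨hhE, hEs⟩ := hQ.1.1 E hEQ
  obtain ⟨a, hDeq, hDw⟩ := strip_classify' hmu hlam hR hDs (cover_sub hP hDP) hDcard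
  obtain ⟨a', hEeq, hEw⟩ := strip_classify' hmu hlam hR hEs (cover_sub hQ hEQ) hEcard
  rcases hDw with ⟨haD, hhD2⟩ | ⟨haD, hhD3⟩
  · rcases hEw with ⟨haE, hhE2⟩ | ⟨haE, hhE3⟩
    · rw [hDeq, hEeq, haD, haE, hhD2, hhE2]
    · exfalso
      rw [haD, hhD2] at hDeq
      obtain ⟨hkey, _⟩ := beta_struct hmu hlam hR hQ haE hi1
        (by rw [← hhE3, ← hEeq]; exact hEQ)
      have hg4 : hgt i mu i = 4 := by
        have := hkey i (by omega) (by omega)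
        omega
      exact alpha_contra hmu hlam hR hi2 hP (hDeq ▸ hDP) hg4
  · rcases hEw with ⟨haE, hhE2⟩ | ⟨haE, hhE3⟩
    · exfalso
      rw [haE, hhE2] at hEeq
      obtain ⟨hkey, _⟩ := beta_struct hmu hlam hR hP haD hi1
        (by rw [← hhD3, ← hDeq]; exact hDP)
      have hg4 : hgt i mu i = 4 := by
        have := hkey i (by omega) (by omega)
        omega
      exact alpha_contra hmu hlam hR hi2 hQ (hEeq ▸ hEQ) hg4
    · have hae : a = a' := by
        obtain ⟨hkeyD, hgD⟩ := beta_struct hmu hlam hR hP haD hi1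
          (by rw [← hhD3, ← hDeq]; exact hDP)
        obtain ⟨hkeyE, hgE⟩ := beta_struct hmu hlam hR hQ haE hi1
          (by rw [← hhE3, ← hEeq]; exact hEQ)
        rcases lt_trichotomy a a' with hlt | heq | hgt
        · exfalso
          have hc : (((a + 1).toNat : ℕ) : ℤ) = a + 1 := Int.toNat_of_nonneg (by omega)
          have := hkeyE ((a + 1).toNat) (by omega) (by omega)
          omega
        · exact heq
        · exfalso
          have hc : (((a' + 1).toNat : ℕ) : ℤ) = a' + 1 := Int.toNat_of_nonneg (by omega)
          have := hkeyD ((a' + 1).toNat) (by omega) (by omega)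
          omega
      rw [hDeq, hEeq, hhD3, hhE3, hae]
lemma card13 {n i : ℕ} {mu lam : Fin n → Bool} (hmu : mu ∈ pathSet n i)
    (hlam : lam ∈ pathSet n i) (hR : rowsF n mu ≤ 2) {P : Finset (Finset (ℤ × ℤ))}
    (hP : P ∈ Conf1 i lam mu) {D : Finset (ℤ × ℤ)} (hD : D ∈ P) :
    D.card = 1 ∨ D.card = 3 := by
  obtain ⟨hh, hs⟩ := hP.1.1 D hD
  by_cases h1 : 1 < D.card
  · obtain ⟨a, heq, _⟩ := strip_classify' hmu hlam hR hs (cover_sub hP hD) h1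
    right
    rw [heq]
    exact tri_card a hh
  · left
    have := Finset.card_pos.mpr (strip_nonempty hs)
    omega

lemma P_disj {n i : ℕ} {mu lam : Fin n → Bool} {P : Finset (Finset (ℤ × ℤ))}
    (hP : P ∈ Conf1 i lam mu) {D D' : Finset (ℤ × ℤ)} (hD : D ∈ P) (hD' : D' ∈ P)
    {b : ℤ × ℤ} (hb : b ∈ D) (hb' : b ∈ D') (hne : D ≠ D') : False :=
  Finset.disjoint_left.mp (hP.1.2.1 D hD D' hD' hne) hb hb'

lemma find_at_h {n i : ℕ} {mu lam : Fin n → Bool} {P : Finset (Finset (ℤ × ℤ))}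
    (hP : P ∈ Conf1 i lam mu) {h : ℤ} {b : ℤ × ℤ}
    (hb : b ∈ (P.filter (fun D => ¬ h < stripHeight D)).biUnion id) (hb2 : b.2 = h) :
    ∃ D ∈ P.filter (fun D => stripHeight D = h), b ∈ D := by
  obtain ⟨D, hD, hbD0⟩ := Finset.mem_biUnion.mp hb
  have hbD : b ∈ D := hbD0
  have hDm := Finset.mem_filter.mp hD
  have h1 := le_sh_of_mem hbD
  exact ⟨D, Finset.mem_filter.mpr ⟨hDm.1, by omega⟩, hbD⟩

lemma bu_mem {n i : ℕ} {mu lam : Fin n → Bool} {P : Finset (Finset (ℤ × ℤ))}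
    (hP : P ∈ Conf1 i lam mu) (h : ℤ) (b : ℤ × ℤ) :
    (∃ D ∈ P.filter (fun D => ¬ h < stripHeight D), b ∈ D) ↔
      (b ∈ region i lam mu ∧ ∀ D ∈ P.filter (fun D => h < stripHeight D), b ∉ D) := by
  constructor
  · rintro ⟨D, hD, hbD⟩
    have hDm := Finset.mem_filter.mp hD
    refine ⟨cover_sub hP hDm.1 b hbD, ?_⟩
    intro D' hD' hbD'
    have hD'm := Finset.mem_filter.mp hD'
    have hne : D ≠ D' := by
      rintro rfl
      exact hDm.2 hD'm.2
    exact P_disj hP hDm.1 hD'm.1 hbD hbD' hne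
  · rintro ⟨hreg, hnot⟩
    rw [← hP.1.2.2] at hreg
    obtain ⟨D, hDP, hbD⟩ := Set.mem_iUnion₂.mp hreg
    by_cases hh : h < stripHeight D
    · exact absurd hbD (hnot D (Finset.mem_filter.mpr ⟨hDP, hh⟩))
    · exact ⟨D, Finset.mem_filter.mpr ⟨hDP, hh⟩, hbD⟩

lemma sum_card_eq {P s : Finset (Finset (ℤ × ℤ))} (hs : s ⊆ P)
    (h13 : ∀ D ∈ P, D.card = 1 ∨ D.card = 3) :
    ∑ D ∈ s, D.card = s.card + 2 * (s.filter (fun D => D.card = 3)).card := by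
  have hsplit := Finset.sum_filter_add_sum_filter_not s (fun D => D.card = 3)
    (fun D => D.card)
  have h3 : ∑ D ∈ s.filter (fun D => D.card = 3), D.card
      = 3 * (s.filter (fun D => D.card = 3)).card := by
    rw [Finset.sum_congr rfl (fun D hD => (Finset.mem_filter.mp hD).2), Finset.sum_const,
      smul_eq_mul, mul_comm]
  have h1 : ∑ D ∈ s.filter (fun D => ¬ D.card = 3), D.card
      = (s.filter (fun D => ¬ D.card = 3)).card := by
    have hone : ∀ D ∈ s.filter (fun D => ¬ D.card = 3), D.card = 1 := by
      intro D hD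
      have hm := Finset.mem_filter.mp hD
      rcases h13 D (hs hm.1) with hc | hc
      · exact hc
      · exact absurd hc hm.2
    rw [Finset.sum_congr rfl hone, Finset.sum_const, smul_eq_mul, mul_one]
  have hc := Finset.card_filter_add_card_filter_not (s := s)
    (p := fun D => D.card = 3)
  omega

lemma strip_ne {n i : ℕ} {mu lam : Fin n → Bool} {P : Finset (Finset (ℤ × ℤ))}
    (hP : P ∈ Conf1 i lam mu) {D : Finset (ℤ × ℤ)} (hD : D ∈ P) : D.Nonempty := by
  obtain ⟨hh, hs⟩ := hP.1.1 D hD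
  exact strip_nonempty hs

lemma no_succ {n i : ℕ} (hi1 : 1 ≤ i) (hi2 : i < n) {mu lam : Fin n → Bool}
    (hmu : mu ∈ pathSet n i) (hlam : lam ∈ pathSet n i) (hR : rowsF n mu ≤ 2) :
    ¬ ∃ P Q, P ∈ Conf1 i lam mu ∧ Q ∈ Conf1 i lam mu ∧ DPsucc P Q ∧ P.card = Q.card := by
  rintro ⟨P, Q, hP, hQ, ⟨h, hpos, heqgt, hne, hcont⟩, hcard⟩
  -- strips of height > h agree
  have hgtEq : P.filter (fun D => h < stripHeight D) = Q.filter (fun D => h < stripHeight D) := by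
    ext D
    simp only [Finset.mem_filter]
    constructor
    · rintro ⟨hDP, hh⟩
      have he := heqgt (stripHeight D) hh
      have hDmem : D ∈ Q.filter (fun D' => stripHeight D' = stripHeight D) := by
        rw [← he]
        exact Finset.mem_filter.mpr ⟨hDP, rfl⟩
      exact ⟨(Finset.mem_filter.mp hDmem).1, hh⟩
    · rintro ⟨hDQ, hh⟩
      have he := heqgt (stripHeight D) hh
      have hDmem : D ∈ P.filter (fun D' => stripHeight D' = stripHeight D) := by
        rw [he]
        exact Finset.mem_filter.mpr ⟨hDQ, rfl⟩
      exact ⟨(Finset.mem_filter.mp hDmem).1, hh⟩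
  have hcardle : (P.filter (fun D => ¬ h < stripHeight D)).card
      = (Q.filter (fun D => ¬ h < stripHeight D)).card := by
    have h1 := Finset.card_filter_add_card_filter_not
      (s := P) (p := fun D => h < stripHeight D)
    have h2 := Finset.card_filter_add_card_filter_not
      (s := Q) (p := fun D => h < stripHeight D)
    rw [hgtEq] at h1
    omega
  have hBU : (P.filter (fun D => ¬ h < stripHeight D)).biUnion id
      = (Q.filter (fun D => ¬ h < stripHeight D)).biUnion id := by
    ext b
    simp only [Finset.mem_biUnion, id_eq]
    have h1 := bu_mem hP h b
    have h2 := bu_mem hQ h b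
    rw [hgtEq] at h1
    rw [h1, h2]
  have hsumeq : ∑ D ∈ P.filter (fun D => ¬ h < stripHeight D), D.card
      = ∑ D ∈ Q.filter (fun D => ¬ h < stripHeight D), D.card := by
    have hdP : ∀ D ∈ P.filter (fun D => ¬ h < stripHeight D),
        ∀ D' ∈ P.filter (fun D => ¬ h < stripHeight D), D ≠ D' → Disjoint (id D) (id D') := by
      intro D hD D' hD' hne2
      exact hP.1.2.1 D (Finset.mem_of_mem_filter _ hD) D' (Finset.mem_of_mem_filter _ hD') hne2
    have hdQ : ∀ D ∈ Q.filter (fun D => ¬ h < stripHeight D),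
        ∀ D' ∈ Q.filter (fun D => ¬ h < stripHeight D), D ≠ D' → Disjoint (id D) (id D') := by
      intro D hD D' hD' hne2
      exact hQ.1.2.1 D (Finset.mem_of_mem_filter _ hD) D' (Finset.mem_of_mem_filter _ hD') hne2
    have hc1 := Finset.card_biUnion hdP
    have hc2 := Finset.card_biUnion hdQ
    rw [hBU] at hc1
    have h3 := hc1.symm.trans hc2
    simpa only [id_eq] using h3
  have hlongeq : ((P.filter (fun D => ¬ h < stripHeight D)).filter
        (fun D => D.card = 3)).card
      = ((Q.filter (fun D => ¬ h < stripHeight D)).filter (fun D => D.card = 3)).card := by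
    have h1 := sum_card_eq (s := P.filter (fun D => ¬ h < stripHeight D))
      (Finset.filter_subset _ P) (fun D hD => card13 hmu hlam hR hP hD)
    have h2 := sum_card_eq (s := Q.filter (fun D => ¬ h < stripHeight D))
      (Finset.filter_subset _ Q) (fun D hD => card13 hmu hlam hR hQ hD)
    omega
  -- main case analysis
  by_cases hQlong : ∃ L ∈ Q.filter (fun D => stripHeight D = h), L.card = 3
  · obtain ⟨L, hLQh, hL3⟩ := hQlong
    have hLQ : L ∈ Q := Finset.mem_of_mem_filter _ hLQh
    have hLsh : stripHeight L = h := (Finset.mem_filter.mp hLQh).2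
    obtain ⟨hhL, hLs⟩ := hQ.1.1 L hLQ
    obtain ⟨aL, hLeq, hLw⟩ := strip_classify' hmu hlam hR hLs (cover_sub hQ hLQ) (by omega)
    have hhLh : hhL = h := by
      rw [hLeq, sh_tri] at hLsh
      exact hLsh
    have hbL : (aL, hhL) ∈ L := by rw [hLeq]; simp [tri]
    have hbQle : (aL, hhL) ∈ (Q.filter (fun D => ¬ h < stripHeight D)).biUnion id := by
      apply Finset.mem_biUnion.mpr
      exact ⟨L, Finset.mem_filter.mpr ⟨hLQ, by omega⟩, hbL⟩
    have hbPle : (aL, hhL) ∈ (P.filter (fun D => ¬ h < stripHeight D)).biUnion id := by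
      rw [hBU]; exact hbQle
    obtain ⟨D1, hD1Ph, hbD1⟩ := find_at_h hP hbPle (by simpa using hhLh)
    obtain ⟨E1, hE1Qh, hsubD1⟩ := hcont D1 hD1Ph
    have hE1L : E1 = L := by
      by_contra hne2
      exact P_disj hQ (Finset.mem_of_mem_filter _ hE1Qh) hLQ (hsubD1 hbD1) hbL hne2
    rw [hE1L] at hsubD1
    have hD1P : D1 ∈ P := Finset.mem_of_mem_filter _ hD1Ph
    by_cases hD13 : D1.card = 3
    · -- L itself belongs to P
      have hD1L : D1 = L := Finset.eq_of_subset_of_card_le hsubD1 (by omega)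
      have hLPh : L ∈ P.filter (fun D => stripHeight D = h) := hD1L ▸ hD1Ph
      have hLP : L ∈ P := Finset.mem_of_mem_filter _ hLPh
      apply hne
      ext D
      constructor
      · intro hD
        have hDP : D ∈ P := Finset.mem_of_mem_filter _ hD
        obtain ⟨E, hEQh, hDE⟩ := hcont D hD
        have hEQ : E ∈ Q := Finset.mem_of_mem_filter _ hEQh
        rcases card13 hmu hlam hR hQ hEQ with hE1c | hE3
        · have hDne : D.Nonempty := strip_ne hP hDP
          have hDeqE : D = E := Finset.eq_of_subset_of_card_le hDE
            (by have := Finset.card_pos.mpr hDne; omega)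
          rw [hDeqE]; exact hEQh
        · have hEL : E = L := long_unique hi1 hi2 hmu hlam hR hQ hQ hEQ hLQ
            (by omega) (by omega)
          rw [hEL] at hDE
          rcases card13 hmu hlam hR hP hDP with hD1c | hD3
          · exfalso
            obtain ⟨b, hbeq⟩ := Finset.card_eq_one.mp hD1c
            have hbD : b ∈ D := hbeq ▸ Finset.mem_singleton_self b
            exact P_disj hP hDP hLP hbD (hDE hbD) (by intro hDL; rw [hDL] at hD1c; omega)
          · have : D = L := Finset.eq_of_subset_of_card_le hDE (by omega)
            rw [this]; exact hLQh
      · intro hD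
        have hDQ : D ∈ Q := Finset.mem_of_mem_filter _ hD
        rcases card13 hmu hlam hR hQ hDQ with hD1c | hD3
        · obtain ⟨b, hbeq⟩ := Finset.card_eq_one.mp hD1c
          have hbD : b ∈ D := hbeq ▸ Finset.mem_singleton_self b
          have hb2 : b.2 = h := by
            have := (Finset.mem_filter.mp hD).2
            rw [hbeq, sh_singleton] at this
            exact this
          have hbQle : b ∈ (Q.filter (fun D => ¬ h < stripHeight D)).biUnion id := by
            apply Finset.mem_biUnion.mpr
            exact ⟨D, Finset.mem_filter.mpr ⟨hDQ, by
              have := (Finset.mem_filter.mp hD).2; omega⟩, hbD⟩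
          have hbPle : b ∈ (P.filter (fun D => ¬ h < stripHeight D)).biUnion id := by
            rw [hBU]; exact hbQle
          obtain ⟨D', hD'Ph, hbD'⟩ := find_at_h hP hbPle hb2
          obtain ⟨E', hE'Qh, hsub'⟩ := hcont D' hD'Ph
          have hE'D : E' = D := by
            by_contra hne2
            exact P_disj hQ (Finset.mem_of_mem_filter _ hE'Qh) hDQ (hsub' hbD') hbD hne2
          rw [hE'D] at hsub'
          have hD'D : D' = D := by
            apply Finset.eq_of_subset_of_card_le hsub'
            have : D'.Nonempty := strip_ne hP (Finset.mem_of_mem_filter _ hD'Ph)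
            have := Finset.card_pos.mpr this
            omega
          rw [← hD'D]; exact hD'Ph
        · have hDL : D = L := long_unique hi1 hi2 hmu hlam hR hQ hQ hDQ hLQ (by omega) (by omega)
          rw [hDL]; exact hLPh
    · -- D1 is a singleton; P must have its long strip somewhere of height ≤ h
      have hLQle : L ∈ (Q.filter (fun D => ¬ h < stripHeight D)).filter
          (fun D => D.card = 3) :=
        Finset.mem_filter.mpr ⟨Finset.mem_filter.mpr ⟨hLQ, by omega⟩, hL3⟩
      have hpos2 : 0 < ((P.filter (fun D => ¬ h < stripHeight D)).filter
          (fun D => D.card = 3)).card := by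
        rw [hlongeq]
        exact Finset.card_pos.mpr ⟨L, hLQle⟩
      obtain ⟨M, hM⟩ := Finset.card_pos.mp hpos2
      have hMm := Finset.mem_filter.mp hM
      have hMP : M ∈ P := Finset.mem_of_mem_filter _ hMm.1
      have hM3 : M.card = 3 := hMm.2
      have hML : M = L := long_unique hi1 hi2 hmu hlam hR hP hQ hMP hLQ (by omega) (by omega)
      -- but then L ∈ P meets D1 ∈ P
      have hD1c : D1.card = 1 := by
        rcases card13 hmu hlam hR hP hD1P with hc | hc
        · exact hc
        · exact absurd hc hD13
      refine P_disj hP hD1P (hML ▸ hMP) hbD1 hbL ?_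
      intro hDL
      rw [hDL] at hD1c
      omega
  · -- no long strip at height h in Q : the filters at height h must coincide
    apply hne
    ext D
    constructor
    · intro hD
      have hDP : D ∈ P := Finset.mem_of_mem_filter _ hD
      obtain ⟨E, hEQh, hDE⟩ := hcont D hD
      have hEQ : E ∈ Q := Finset.mem_of_mem_filter _ hEQh
      have hE1c : E.card = 1 := by
        rcases card13 hmu hlam hR hQ hEQ with hc | hc
        · exact hc
        · exact absurd ⟨E, hEQh, hc⟩ hQlong
      have hDne : D.Nonempty := strip_ne hP hDP
      have hDeqE : D = E := Finset.eq_of_subset_of_card_le hDE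
        (by have := Finset.card_pos.mpr hDne; omega)
      rw [hDeqE]; exact hEQh
    · intro hD
      have hDQ : D ∈ Q := Finset.mem_of_mem_filter _ hD
      have hD1c : D.card = 1 := by
        rcases card13 hmu hlam hR hQ hDQ with hc | hc
        · exact hc
        · exact absurd ⟨D, hD, hc⟩ hQlong
      obtain ⟨b, hbeq⟩ := Finset.card_eq_one.mp hD1c
      have hbD : b ∈ D := hbeq ▸ Finset.mem_singleton_self b
      have hb2 : b.2 = h := by
        have := (Finset.mem_filter.mp hD).2
        rw [hbeq, sh_singleton] at this
        exact this
      have hbQle : b ∈ (Q.filter (fun D => ¬ h < stripHeight D)).biUnion id := by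
        apply Finset.mem_biUnion.mpr
        exact ⟨D, Finset.mem_filter.mpr ⟨hDQ, by
          have := (Finset.mem_filter.mp hD).2; omega⟩, hbD⟩
      have hbPle : b ∈ (P.filter (fun D => ¬ h < stripHeight D)).biUnion id := by
        rw [hBU]; exact hbQle
      obtain ⟨D', hD'Ph, hbD'⟩ := find_at_h hP hbPle hb2
      obtain ⟨E', hE'Qh, hsub'⟩ := hcont D' hD'Ph
      have hE'D : E' = D := by
        by_contra hne2
        exact P_disj hQ (Finset.mem_of_mem_filter _ hE'Qh) hDQ (hsub' hbD') hbD hne2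
      rw [hE'D] at hsub'
      have hD'D : D' = D := by
        apply Finset.eq_of_subset_of_card_le hsub'
        have h5 : D'.Nonempty := strip_ne hP (Finset.mem_of_mem_filter _ hD'Ph)
        have := Finset.card_pos.mpr h5
        omega
      rw [← hD'D]; exact hD'Ph

end TwoRowsAux

/-- if the tableau of `μ` has at most 2 rows then every type-1 Dyck partition
has at most one strip of length `> 1`, and there are no `P ≻ Q` in `Conf¹(λ,μ)` with
`|P| = |Q|`. -/
theorem two_rows_no_order (n i : ℕ) (hi1 : 1 ≤ i) (hi2 : i < n)
    (mu : Fin n → Bool) (hmu : mu ∈ pathSet n i)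
    (hrows : (Finset.univ.filter fun k : Fin n =>
        mu k = true ∧ ∃ k' : Fin n, k' < k ∧ mu k' = false).card ≤ 2)
    (lam : Fin n → Bool) (hlam : lam ∈ pathSet n i) (hle : pathLE i lam mu) :
    (∀ P ∈ Conf1 i lam mu, ∀ D ∈ P, ∀ D' ∈ P, 1 < D.card → 1 < D'.card → D = D') ∧
    ¬ ∃ P Q, P ∈ Conf1 i lam mu ∧ Q ∈ Conf1 i lam mu ∧ DPsucc P Q ∧ P.card = Q.card := by
  have hR : rowsF n mu ≤ 2 := hrows
  constructor
  · intro P hP D hD D' hD' h1 h1'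
    exact long_unique hi1 hi2 hmu hlam hR hP hP hD hD' h1 h1'
  · exact no_succ hi1 hi2 hmu hlam hR
end
end

section
/- Let o = (D_{σ(1)},…,D_{σ(k)}) be an admissible ordering of a type-1 Dyck partition P of A(λ,μ) (each D_{σ(j)} can be added to λ + D_{σ(1)} + ⋯ + D_{σ(j−1)}). If σ(j) indices satisfy hgt(D_{σ(j)}) > hgt(D_{σ(j+1)}) for some j, then D_{σ(j)} and D_{σ(j+1)} are distant strips and the ordering obtained by swapping positions j and j+1 is again admissible. Consequently, every admissible order can be transformed by such swaps to the admissible order o_hgt listing strips by weakly increasing height. -/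
open scoped Classical

noncomputable section

/-- Swap the entries at positions `j` and `j+1` of a list of strips. -/
def swapAt' (l : List (Finset (ℤ × ℤ))) (j : ℕ) : List (Finset (ℤ × ℤ)) :=
  (l.set j (l.getD (j + 1) ∅)).set (j + 1) (l.getD j ∅)

/-- An ordering `o` of Dyck strips is admissible (starting from the path `λ`) if each strip can
be added in turn: there are intermediate paths `ν_0 = λ, ν_1, …` with `A(ν_j, ν_{j+1})`
equal to the `j`-th strip. -/
def Admissible {n : ℕ} (i : ℕ) (lam : Fin n → Bool) (o : List (Finset (ℤ × ℤ))) : Prop :=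
  ∃ ν : ℕ → (Fin n → Bool), ν 0 = lam ∧ (∀ j, ν j ∈ pathSet n i) ∧
    ∀ j < o.length, pathLE i (ν j) (ν (j + 1)) ∧
      region i (ν j) (ν (j + 1)) = ↑(o.getD j ∅)


namespace AdmSwapAux

lemma hgt_zero {n : ℕ} (i : ℕ) (lam : Fin n → Bool) : hgt i lam 0 = i := by
  simp [hgt]

lemma hgt_succ {n : ℕ} (i : ℕ) (lam : Fin n → Bool) {j : ℕ} (hj : j < n) :
    hgt i lam (j+1) = hgt i lam j + (if lam ⟨j, hj⟩ then (-1:ℤ) else 1) := by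
  unfold hgt
  have : Finset.univ.filter (fun k : Fin n => (k : ℕ) < j + 1)
      = insert ⟨j, hj⟩ (Finset.univ.filter (fun k : Fin n => (k : ℕ) < j)) := by
    ext k
    simp only [Finset.mem_filter, Finset.mem_univ, true_and, Finset.mem_insert,
      Nat.lt_succ_iff_lt_or_eq]
    constructor
    · rintro (h | h)
      · exact Or.inr h
      · exact Or.inl (Fin.ext h)
    · rintro (h | h)
      · exact Or.inr (by rw [h])
      · exact Or.inl h
  rw [this, Finset.sum_insert (by simp)]
  ring

lemma hgt_parity {n : ℕ} (i : ℕ) (lam : Fin n → Bool) :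
    ∀ j ≤ n, Even (hgt i lam j + i + j) := by
  intro j
  induction j with
  | zero => intro _; simp [hgt_zero]
  | succ j ih =>
    intro hj
    have hjn : j < n := hj
    obtain ⟨t, ht⟩ := ih (le_of_lt hjn)
    rw [hgt_succ i lam hjn]
    by_cases h : lam ⟨j, hjn⟩
    · exact ⟨t, by push_cast at ht ⊢; simp [h]; omega⟩
    · exact ⟨t + 1, by push_cast at ht ⊢; simp [h]; omega⟩

lemma hgt_n {n : ℕ} (i : ℕ) (lam : Fin n → Bool) :
    hgt i lam n = (i : ℤ) + n - 2 * (Finset.univ.filter fun k => lam k = true).card := by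
  unfold hgt
  have h1 : Finset.univ.filter (fun k : Fin n => (k : ℕ) < n) = Finset.univ := by
    ext k; simp [k.isLt]
  rw [h1]
  rw [← Finset.sum_filter_add_sum_filter_not Finset.univ (fun k => lam k = true)]
  have h2 : ∀ k ∈ Finset.univ.filter (fun k : Fin n => lam k = true),
      (if lam k then (-1:ℤ) else 1) = -1 := by intro k hk; simp at hk; simp [hk]
  have h3 : ∀ k ∈ Finset.univ.filter (fun k : Fin n => ¬ lam k = true),
      (if lam k then (-1:ℤ) else 1) = 1 := by intro k hk; simp at hk; simp [hk]
  rw [Finset.sum_congr rfl h2, Finset.sum_congr rfl h3]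
  simp only [Finset.sum_const, nsmul_eq_mul, mul_one, mul_neg_one]
  have h4 : (Finset.univ.filter (fun k : Fin n => ¬ lam k = true)).card
      = n - (Finset.univ.filter (fun k : Fin n => lam k = true)).card := by
    rw [Finset.filter_not, Finset.card_sdiff_of_subset (Finset.filter_subset _ _)]
    simp
  rw [h4]

  have hle : (Finset.univ.filter (fun k : Fin n => lam k = true)).card ≤ n := by
    simpa using Finset.card_filter_le Finset.univ (fun k : Fin n => lam k = true)
  push_cast [hle]
  ring

lemma mem_pathSet_iff {n : ℕ} (i : ℕ) (lam : Fin n → Bool) :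
    lam ∈ pathSet n i ↔ hgt i lam n = (n : ℤ) - i := by
  rw [pathSet, Set.mem_setOf_eq, hgt_n]
  constructor
  · intro h; rw [h]; ring
  · intro h
    have : 2 * ((Finset.univ.filter fun k => lam k = true).card : ℤ) = 2 * i := by omega
    omega

lemma stripHeight_eq {D : Finset (ℤ × ℤ)} {h : ℤ} (hne : ∃ b ∈ D, b.2 = h)
    (hub : ∀ b ∈ D, b.2 ≤ h) : stripHeight D = h := by
  obtain ⟨b0, hb0, hb0h⟩ := hne
  have h1 : (D.image Prod.snd).max = (h : WithBot ℤ) := by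
    apply le_antisymm
    · apply Finset.max_le
      intro y hy
      obtain ⟨b, hb, rfl⟩ := Finset.mem_image.mp hy
      exact_mod_cast hub b hb
    · rw [← hb0h]
      exact Finset.le_max (Finset.mem_image.mpr ⟨b0, hb0, rfl⟩)
  rw [stripHeight, h1]; rfl

lemma region_strip {n : ℕ} {i : ℕ} {lam mu : Fin n → Bool}
    (hlam : lam ∈ pathSet n i) (hmu : mu ∈ pathSet n i) (hle : pathLE i lam mu)
    {D : Finset (ℤ × ℤ)} {h : ℤ} (hD : IsDyckStrip D h)
    (hreg : region i lam mu = ↑D) :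
    ∃ (a l : ℕ), 1 ≤ a ∧ a + 2*l < n ∧
      (∀ x : ℕ, a ≤ x → x ≤ a + 2*l →
        hgt i mu x = hgt i lam x + 2 ∧ ((x:ℤ), hgt i lam x + 1) ∈ D) ∧
      (∀ x : ℕ, x ≤ n → ¬(a ≤ x ∧ x ≤ a + 2*l) → hgt i mu x = hgt i lam x) ∧
      (∀ b ∈ D, ∃ x : ℕ, a ≤ x ∧ x ≤ a + 2*l ∧ b = ((x:ℤ), hgt i lam x + 1)) ∧
      hgt i lam a = h - 1 ∧ hgt i lam (a + 2*l) = h - 1 ∧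
      (∀ b ∈ D, b.2 ≤ h) ∧ stripHeight D = h := by
  obtain ⟨x₀, l, d, hd0, hd2l, hstep, hdle, hDeq⟩ := hD
  have hboxD : ∀ k ≤ 2*l, ((x₀ + (k:ℤ), h + d k)) ∈ D := by
    intro k hk
    rw [hDeq]
    exact Finset.mem_image.mpr ⟨k, Finset.mem_range.mpr (by omega), rfl⟩
  have hDreg : ∀ b ∈ D, b ∈ region i lam mu := by
    intro b hb; rw [hreg]; exact hb
  have hx0 : (0:ℤ) ≤ x₀ := by
    have := hDreg _ (hboxD 0 (by omega))
    simpa using this.1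
  set a : ℕ := x₀.toNat with ha
  have hax : (a:ℤ) = x₀ := Int.toNat_of_nonneg hx0
  -- uniqueness of box per column
  have uniq : ∀ (x y y' : ℤ), (x, y) ∈ D → (x, y') ∈ D → y = y' := by
    intro x y y' hy hy'
    rw [hDeq] at hy hy'
    obtain ⟨k, hk, hk2⟩ := Finset.mem_image.mp hy
    obtain ⟨k', hk', hk2'⟩ := Finset.mem_image.mp hy'
    have e1 : x₀ + (k:ℤ) = x := (Prod.mk.injEq _ _ _ _).mp hk2 |>.1
    have e2 : x₀ + (k':ℤ) = x := (Prod.mk.injEq _ _ _ _).mp hk2' |>.1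
    have : k = k' := by omega
    subst this
    have e3 : h + d k = y := (Prod.mk.injEq _ _ _ _).mp hk2 |>.2
    have e4 : h + d k = y' := (Prod.mk.injEq _ _ _ _).mp hk2' |>.2
    omega
  -- dichotomy per column
  have key : ∀ x : ℕ, x ≤ n → hgt i mu x = hgt i lam x ∨
      (hgt i mu x = hgt i lam x + 2 ∧ ((x:ℤ), hgt i lam x + 1) ∈ D) := by
    intro x hx
    by_cases heq : hgt i mu x = hgt i lam x
    · exact Or.inl heq
    · right
      have hle' := hle x hx
      obtain ⟨s, hs⟩ := hgt_parity i lam x hx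
      obtain ⟨t, ht⟩ := hgt_parity i mu x hx
      have hge2 : hgt i lam x + 2 ≤ hgt i mu x := by omega
      have hmem1 : ((x:ℤ), hgt i lam x + 1) ∈ region i lam mu := by
        refine ⟨by positivity, by show ((x:ℤ)) ≤ (n:ℤ); exact_mod_cast hx,
          ⟨s, by push_cast; omega⟩, ?_, ?_⟩ <;>
          simp only [Int.toNat_natCast] <;> omega
      have hmem2 : ((x:ℤ), hgt i mu x - 1) ∈ region i lam mu := by
        refine ⟨by positivity, by show ((x:ℤ)) ≤ (n:ℤ); exact_mod_cast hx,
          ⟨t - 1, by push_cast; omega⟩, ?_, ?_⟩ <;>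
          simp only [Int.toNat_natCast] <;> omega
      rw [hreg] at hmem1 hmem2
      have := uniq _ _ _ (by exact_mod_cast hmem1) (by exact_mod_cast hmem2)
      exact ⟨by omega, by exact_mod_cast hmem1⟩
  -- boxes of D
  have colD : ∀ b ∈ D, ∃ x : ℕ, b = ((x:ℤ), hgt i lam x + 1) ∧ x ≤ n ∧
      hgt i mu x = hgt i lam x + 2 := by
    intro b hb
    have hr := hDreg b hb
    obtain ⟨h1, h2, h3, h4, h5⟩ := hr
    set x : ℕ := b.1.toNat with hxdef
    have hbx : (x:ℤ) = b.1 := Int.toNat_of_nonneg h1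
    have hxn : x ≤ n := by omega
    rcases key x hxn with hk | ⟨hk, hbox⟩
    · omega
    · have hb2 : b.2 = hgt i lam x + 1 := by omega
      exact ⟨x, Prod.ext_iff.mpr ⟨hbx.symm, hb2⟩, hxn, hk⟩
  -- columns of D = [a, a+2l]
  have colset : ∀ x : ℕ, (∃ y, ((x:ℤ), y) ∈ D) ↔ (a ≤ x ∧ x ≤ a + 2*l) := by
    intro x
    constructor
    · rintro ⟨y, hy⟩
      rw [hDeq] at hy
      obtain ⟨k, hk, hk2⟩ := Finset.mem_image.mp hy
      have hkr := Finset.mem_range.mp hk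
      have e1 : x₀ + (k:ℤ) = (x:ℤ) := (Prod.mk.injEq _ _ _ _).mp hk2 |>.1
      omega
    · rintro ⟨h1, h2⟩
      refine ⟨h + d (x - a), ?_⟩
      have := hboxD (x - a) (by omega)
      have e : x₀ + ((x - a : ℕ) : ℤ) = (x:ℤ) := by omega
      rwa [e] at this
  have hcoln : ∀ x : ℕ, a ≤ x → x ≤ a + 2*l → x ≤ n := by
    intro x h1 h2
    obtain ⟨y, hy⟩ := (colset x).mpr ⟨h1, h2⟩
    obtain ⟨x', hx', hx'n, _⟩ := colD _ hy
    have : (x:ℤ) = (x':ℤ) := congrArg Prod.fst hx'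
    omega
  have mu_on : ∀ x : ℕ, a ≤ x → x ≤ a + 2*l →
      hgt i mu x = hgt i lam x + 2 ∧ ((x:ℤ), hgt i lam x + 1) ∈ D := by
    intro x h1 h2
    rcases key x (hcoln x h1 h2) with hk | hk
    · exfalso
      obtain ⟨y, hy⟩ := (colset x).mpr ⟨h1, h2⟩
      obtain ⟨x', hx', _, hg⟩ := colD _ hy
      have : (x:ℤ) = (x':ℤ) := congrArg Prod.fst hx'
      have : x = x' := by omega
      subst this; omega
    · exact hk
  have mu_off : ∀ x : ℕ, x ≤ n → ¬(a ≤ x ∧ x ≤ a + 2*l) → hgt i mu x = hgt i lam x := by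
    intro x hx hni
    rcases key x hx with hk | ⟨hk, hbox⟩
    · exact hk
    · exact absurd ((colset x).mp ⟨_, hbox⟩) hni
  have hD_form : ∀ b ∈ D, ∃ x : ℕ, a ≤ x ∧ x ≤ a + 2*l ∧ b = ((x:ℤ), hgt i lam x + 1) := by
    intro b hb
    obtain ⟨x, hx, _, _⟩ := colD b hb
    have hxcol : ∃ y, ((x:ℤ), y) ∈ D := ⟨_, hx ▸ hb⟩
    obtain ⟨h1, h2⟩ := (colset x).mp hxcol
    exact ⟨x, h1, h2, hx⟩
  -- bounds
  have ha1 : 1 ≤ a := by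
    by_contra hc
    have h0 : a = 0 := by omega
    have := (mu_on a le_rfl (by omega)).1
    rw [h0, hgt_zero, hgt_zero] at this
    omega
  have hbn : a + 2*l < n := by
    have hn := hcoln (a + 2*l) (by omega) le_rfl
    rcases Nat.lt_or_ge (a + 2*l) n with h' | h'
    · exact h'
    · exfalso
      have he : a + 2*l = n := by omega
      have := (mu_on (a + 2*l) (by omega) le_rfl).1
      rw [he, (mem_pathSet_iff i lam).mp hlam, (mem_pathSet_iff i mu).mp hmu] at this
      omega
  -- endpoints
  have hend1 : hgt i lam a = h - 1 := by
    have hb := hboxD 0 (by omega)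
    simp only [Nat.cast_zero, add_zero, hd0] at hb
    obtain ⟨x, hx, _, _⟩ := colD _ hb
    have e1 : x₀ = (x:ℤ) := congrArg Prod.fst hx
    have e2 : h = hgt i lam x + 1 := congrArg Prod.snd hx
    have hxa : x = a := by omega
    rw [hxa] at e2
    omega
  have hend2 : hgt i lam (a + 2*l) = h - 1 := by
    have hb := hboxD (2*l) le_rfl
    rw [hd2l, add_zero] at hb
    obtain ⟨x, hx, _, _⟩ := colD _ hb
    have e1 : x₀ + (2*l : ℕ) = (x:ℤ) := congrArg Prod.fst hx
    have e2 : h = hgt i lam x + 1 := congrArg Prod.snd hx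
    have hxa : x = a + 2*l := by omega
    rw [hxa] at e2
    omega
  have hub : ∀ b ∈ D, b.2 ≤ h := by
    intro b hb
    rw [hDeq] at hb
    obtain ⟨k, hk, hk2⟩ := Finset.mem_image.mp hb
    have := hdle k (by have := Finset.mem_range.mp hk; omega)
    have e : h + d k = b.2 := congrArg Prod.snd hk2
    omega
  refine ⟨a, l, ha1, hbn, mu_on, mu_off, hD_form, hend1, hend2, hub, ?_⟩
  exact stripHeight_eq ⟨_, hboxD 0 (by omega), by simp [hd0]⟩ hub

lemma hgt_update {n : ℕ} (i : ℕ) (ν0 : Fin n → Bool) (ka kb : Fin n) (hne : ka ≠ kb)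
    (hka : ν0 ka = true) (hkb : ν0 kb = false) (x : ℕ) :
    hgt i (Function.update (Function.update ν0 ka false) kb true) x
      = hgt i ν0 x + (if (ka:ℕ) < x then 2 else 0) - (if (kb:ℕ) < x then 2 else 0) := by
  set ν' := Function.update (Function.update ν0 ka false) kb true with hv
  unfold hgt
  set s := Finset.univ.filter (fun k : Fin n => (k : ℕ) < x) with hs
  have hpt : ∀ k ∈ s, (if ν' k then (-1:ℤ) else 1)
      = (if ν0 k then (-1:ℤ) else 1) + ((if k = ka then 2 else 0) + (if k = kb then -2 else 0)) := by
    intro k _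
    by_cases h1 : k = kb
    · subst h1
      simp [hv, Function.update, hkb, hne.symm]
    · by_cases h2 : k = ka
      · subst h2
        simp [hv, Function.update, hka, h1, hne]
      · simp [hv, Function.update, h1, h2]
  rw [Finset.sum_congr rfl hpt, Finset.sum_add_distrib, Finset.sum_add_distrib,
    Finset.sum_ite_eq' s ka (fun _ => (2:ℤ)), Finset.sum_ite_eq' s kb (fun _ => (-2:ℤ))]
  have hma : ka ∈ s ↔ (ka:ℕ) < x := by simp [hs]
  have hmb : kb ∈ s ↔ (kb:ℕ) < x := by simp [hs]
  by_cases h1 : (ka:ℕ) < x <;> by_cases h2 : (kb:ℕ) < x <;>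
    simp [hma.mpr, hmb.mpr, h1, h2, hma, hmb] <;> ring

lemma swap_core {n i : ℕ} {ν0 ν1 ν2 : Fin n → Bool}
    (h0 : ν0 ∈ pathSet n i) (h1 : ν1 ∈ pathSet n i) (h2 : ν2 ∈ pathSet n i)
    (hle01 : pathLE i ν0 ν1) (hle12 : pathLE i ν1 ν2)
    {D C : Finset (ℤ × ℤ)} {hd hc : ℤ}
    (hDs : IsDyckStrip D hd) (hCs : IsDyckStrip C hc)
    (hregD : region i ν0 ν1 = ↑D) (hregC : region i ν1 ν2 = ↑C)
    (htype1 : (∃ b ∈ D, (b.1, b.2 + 2) ∈ C) → ∀ b ∈ D, (b.1, b.2 + 2) ∈ C)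
    (hlt : stripHeight C < stripHeight D) :
    Distant D C ∧ ∃ ν' : Fin n → Bool, ν' ∈ pathSet n i ∧ pathLE i ν0 ν' ∧
      region i ν0 ν' = ↑C ∧ pathLE i ν' ν2 ∧ region i ν' ν2 = ↑D := by
  obtain ⟨a, l, ha1, hbn, onD, offD, formD, end1D, end2D, ubD, shD⟩ :=
    region_strip h0 h1 hle01 hDs hregD
  obtain ⟨a', m, ha1', hbn', onC, offC, formC, end1C, end2C, ubC, shC⟩ :=
    region_strip h1 h2 hle12 hCs hregC
  rw [shD, shC] at hlt
  -- step lemma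
  have step : ∀ (ν : Fin n → Bool) (x : ℕ), x < n →
      hgt i ν (x+1) = hgt i ν x + 1 ∨ hgt i ν (x+1) = hgt i ν x - 1 := by
    intro ν x hx
    rw [hgt_succ i ν hx]
    by_cases h : ν ⟨x, hx⟩ <;> simp [h] <;> omega
  -- intervals disjoint
  have hdisj : ∀ x : ℕ, a ≤ x → x ≤ a + 2*l → ¬(a' ≤ x ∧ x ≤ a' + 2*m) := by
    rintro x hx1 hx2 ⟨hy1, hy2⟩
    have hbD := onD x hx1 hx2
    have hbC := onC x hy1 hy2
    have htrig : ∃ b ∈ D, (b.1, b.2 + 2) ∈ C := by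
      refine ⟨((x:ℤ), hgt i ν0 x + 1), hbD.2, ?_⟩
      have : hgt i ν1 x + 1 = hgt i ν0 x + 1 + 2 := by rw [hbD.1]; ring
      rw [← this]
      exact hbC.2
    have hall := htype1 htrig
    have hb0 := onD a le_rfl (by omega)
    have := hall _ hb0.2
    have hub := ubC _ this
    simp only at hub
    omega
  have hsep : a + 2*l < a' ∨ a' + 2*m < a := by
    by_contra hcon
    push_neg at hcon
    obtain ⟨hc1, hc2⟩ := hcon
    exact hdisj (max a a') (le_max_left _ _) (by omega)
      ⟨le_max_right _ _, by omega⟩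
  -- not adjacent
  have hgap : a + 2*l + 2 ≤ a' ∨ a' + 2*m + 2 ≤ a := by
    rcases hsep with hs | hs
    · left
      rcases Nat.lt_or_ge (a + 2*l + 1) a' with h' | h'
      · omega
      · exfalso
        have hadj : a' = a + 2*l + 1 := by omega
        have hv1 : hgt i ν1 (a + 2*l) = hd + 1 := by
          rw [(onD (a+2*l) (by omega) le_rfl).1, end2D]; ring
        have hv2 : hgt i ν1 a' = hc - 1 := end1C
        have := step ν1 (a + 2*l) (by omega)
        rw [← hadj] at *
        omega
    · right
      rcases Nat.lt_or_ge (a' + 2*m + 1) a with h' | h'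
      · omega
      · exfalso
        have hadj : a = a' + 2*m + 1 := by omega
        have hv1 : hgt i ν1 a = hd + 1 := by
          rw [(onD a le_rfl (by omega)).1, end1D]; ring
        have hv2 : hgt i ν1 (a' + 2*m) = hc - 1 := end2C
        have := step ν1 (a' + 2*m) (by omega)
        rw [← hadj] at *
        omega
  have hcoldisj : ∀ x : ℕ, a ≤ x → x ≤ a + 2*l → ¬(a' ≤ x ∧ x ≤ a' + 2*m) := hdisj
  -- Distant
  have hdist : Distant D C := by
    intro b hb
    obtain ⟨x, hx1, hx2, rfl⟩ := formD b hb
    constructor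
    · intro hmem
      obtain ⟨x', hx1', hx2', he⟩ := formC _ hmem
      have : (x:ℤ) = (x':ℤ) := congrArg Prod.fst he
      omega
    · intro hmem
      obtain ⟨x', hx1', hx2', he⟩ := formC _ hmem
      have : (x:ℤ) = (x':ℤ) := congrArg Prod.fst he
      omega
  refine ⟨hdist, ?_⟩
  -- columns near I_C are outside I_D
  have houtD : ∀ x : ℕ, a' - 1 ≤ x → x ≤ a' + 2*m + 1 → ¬(a ≤ x ∧ x ≤ a + 2*l) := by
    intro x hx1 hx2 ⟨hy1, hy2⟩
    omega
  -- the two boundary steps of ν0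
  have ka : Fin n := ⟨a' - 1, by omega⟩
  -- values of ν1 on the relevant columns
  have hv1eq : ∀ x : ℕ, a' - 1 ≤ x → x ≤ a' + 2*m + 1 → hgt i ν1 x = hgt i ν0 x := by
    intro x hx1 hx2
    exact offD x (by omega) (houtD x hx1 hx2)
  -- step analysis at a'-1
  have hstepa : hgt i ν0 a' = hgt i ν0 (a' - 1) - 1 := by
    have e : a' - 1 + 1 = a' := by omega
    have s0 := step ν0 (a' - 1) (by omega)
    have s2 := step ν2 (a' - 1) (by omega)
    rw [e] at s0 s2
    have hv2a : hgt i ν2 a' = hgt i ν1 a' + 2 := (onC a' le_rfl (by omega)).1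
    have hv2a' : hgt i ν2 (a' - 1) = hgt i ν1 (a' - 1) := by
      apply offC (a' - 1) (by omega)
      omega
    have e1 := hv1eq a' (by omega) (by omega)
    have e2 := hv1eq (a' - 1) le_rfl (by omega)
    omega
  have hstepb : hgt i ν0 (a' + 2*m + 1) = hgt i ν0 (a' + 2*m) + 1 := by
    have s0 := step ν0 (a' + 2*m) (by omega)
    have s2 := step ν2 (a' + 2*m) (by omega)
    have hv2a : hgt i ν2 (a' + 2*m) = hgt i ν1 (a' + 2*m) + 2 :=
      (onC (a' + 2*m) (by omega) le_rfl).1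
    have hv2a' : hgt i ν2 (a' + 2*m + 1) = hgt i ν1 (a' + 2*m + 1) := by
      apply offC (a' + 2*m + 1) (by omega)
      omega
    have e1 := hv1eq (a' + 2*m) (by omega) (by omega)
    have e2 := hv1eq (a' + 2*m + 1) (by omega) (by omega)
    omega
  -- bool values
  have hka : ν0 ⟨a' - 1, by omega⟩ = true := by
    have := hgt_succ i ν0 (show a' - 1 < n by omega)
    have e : a' - 1 + 1 = a' := by omega
    rw [e] at this
    by_contra hcon
    simp only [Bool.not_eq_true] at hcon
    rw [hcon] at this
    simp at this
    omega
  have hkb : ν0 ⟨a' + 2*m, by omega⟩ = false := by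
    have := hgt_succ i ν0 (show a' + 2*m < n by omega)
    by_contra hcon
    simp only [Bool.not_eq_false] at hcon
    rw [hcon] at this
    simp at this
    omega
  set Ka : Fin n := ⟨a' - 1, by omega⟩ with hKa
  set Kb : Fin n := ⟨a' + 2*m, by omega⟩ with hKb
  have hne : Ka ≠ Kb := by
    intro hcon
    have := congrArg Fin.val hcon
    simp [hKa, hKb] at this
    omega
  set ν' := Function.update (Function.update ν0 Ka false) Kb true with hnu
  have hupd : ∀ x : ℕ, hgt i ν' x
      = hgt i ν0 x + (if a' ≤ x ∧ x ≤ a' + 2*m then 2 else 0) := by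
    intro x
    rw [hnu, hgt_update i ν0 Ka Kb hne hka hkb x]
    simp only [hKa, hKb, Fin.val_mk]
    split_ifs <;> omega
  -- ν2 in terms of ν0
  have h2eq : ∀ x : ℕ, x ≤ n → hgt i ν2 x = hgt i ν0 x
      + (if a' ≤ x ∧ x ≤ a' + 2*m then 2 else 0)
      + (if a ≤ x ∧ x ≤ a + 2*l then 2 else 0) := by
    intro x hx
    by_cases hC : a' ≤ x ∧ x ≤ a' + 2*m
    · have hD' : ¬(a ≤ x ∧ x ≤ a + 2*l) := fun hD' => hcoldisj x hD'.1 hD'.2 hC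
      rw [if_pos hC, if_neg hD']
      have := (onC x hC.1 hC.2).1
      have := offD x hx hD'
      omega
    · rw [if_neg hC]
      by_cases hDc : a ≤ x ∧ x ≤ a + 2*l
      · rw [if_pos hDc]
        have := (onD x hDc.1 hDc.2).1
        have := offC x hx hC
        omega
      · rw [if_neg hDc]
        have := offD x hx hDc
        have := offC x hx hC
        omega
  refine ⟨ν', ?_, ?_, ?_, ?_, ?_⟩
  · -- pathSet
    rw [mem_pathSet_iff]
    rw [hupd n, if_neg (by omega), add_zero]
    exact (mem_pathSet_iff i ν0).mp h0
  · -- pathLE ν0 ν'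
    intro j hj
    rw [hupd j]
    split_ifs <;> omega
  · -- region ν0 ν' = C
    ext b
    constructor
    · rintro ⟨hb1, hb2, hb3, hb4, hb5⟩
      set x : ℕ := b.1.toNat with hx
      have hbx : (x:ℤ) = b.1 := Int.toNat_of_nonneg hb1
      have hxn : x ≤ n := by omega
      rw [hupd x] at hb5
      have hC : a' ≤ x ∧ x ≤ a' + 2*m := by
        by_contra hcon
        rw [if_neg hcon] at hb5
        omega
      rw [if_pos hC] at hb5
      have hb2' : b.2 = hgt i ν0 x + 1 := by omega
      have hbox := (onC x hC.1 hC.2).2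
      have hv1 : hgt i ν1 x = hgt i ν0 x := hv1eq x (by omega) (by omega)
      rw [hv1] at hbox
      have : b = ((x:ℤ), hgt i ν0 x + 1) := Prod.ext_iff.mpr ⟨hbx.symm, hb2'⟩
      rw [this]
      exact hbox
    · intro hb
      obtain ⟨x, hx1, hx2, rfl⟩ := formC b (by exact_mod_cast hb)
      have hv1 : hgt i ν1 x = hgt i ν0 x := hv1eq x (by omega) (by omega)
      rw [hv1]
      have hxn : x ≤ n := by omega
      obtain ⟨s, hs⟩ := hgt_parity i ν0 x hxn
      refine ⟨by positivity, by show ((x:ℤ)) ≤ (n:ℤ); exact_mod_cast hxn,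
        ⟨s, by push_cast; omega⟩, ?_, ?_⟩
      · simp only [Int.toNat_natCast]; omega
      · simp only [Int.toNat_natCast]
        rw [hupd x, if_pos ⟨hx1, hx2⟩]
        omega
  · -- pathLE ν' ν2
    intro j hj
    rw [hupd j, h2eq j hj]
    split_ifs <;> omega
  · -- region ν' ν2 = D
    ext b
    constructor
    · rintro ⟨hb1, hb2, hb3, hb4, hb5⟩
      set x : ℕ := b.1.toNat with hx
      have hbx : (x:ℤ) = b.1 := Int.toNat_of_nonneg hb1
      have hxn : x ≤ n := by omega
      rw [hupd x] at hb4
      rw [h2eq x hxn] at hb5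
      have hD' : a ≤ x ∧ x ≤ a + 2*l := by
        by_contra hcon
        rw [if_neg hcon] at hb5
        split_ifs at hb4 hb5 <;> omega
      have hC : ¬(a' ≤ x ∧ x ≤ a' + 2*m) := fun hC => hcoldisj x hD'.1 hD'.2 hC
      rw [if_neg hC] at hb4 hb5
      rw [if_pos hD'] at hb5
      have hb2' : b.2 = hgt i ν0 x + 1 := by omega
      have hbox := (onD x hD'.1 hD'.2).2
      have : b = ((x:ℤ), hgt i ν0 x + 1) := Prod.ext_iff.mpr ⟨hbx.symm, hb2'⟩
      rw [this]
      exact hbox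
    · intro hb
      obtain ⟨x, hx1, hx2, rfl⟩ := formD b (by exact_mod_cast hb)
      have hxn : x ≤ n := by omega
      have hC : ¬(a' ≤ x ∧ x ≤ a' + 2*m) := fun hC => hcoldisj x hx1 hx2 hC
      obtain ⟨s, hs⟩ := hgt_parity i ν0 x hxn
      refine ⟨by positivity, by show ((x:ℤ)) ≤ (n:ℤ); exact_mod_cast hxn,
        ⟨s, by push_cast; omega⟩, ?_, ?_⟩
      · simp only [Int.toNat_natCast]
        rw [hupd x, if_neg hC]
        omega
      · simp only [Int.toNat_natCast]
        rw [h2eq x hxn, if_neg hC, if_pos ⟨hx1, hx2⟩]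
        omega

lemma length_swapAt' (l : List (Finset (ℤ × ℤ))) (j : ℕ) :
    (swapAt' l j).length = l.length := by simp [swapAt']

lemma getD_swapAt'_left (l : List (Finset (ℤ × ℤ))) (j : ℕ) (hj : j + 1 < l.length) :
    (swapAt' l j).getD j ∅ = l.getD (j + 1) ∅ := by
  rw [swapAt', List.getD_eq_getElem _ _ (by simp; omega)]
  simp only [List.getElem_set, if_neg (by omega : ¬(j + 1 = j)), if_pos rfl]
  simp

lemma getD_swapAt'_right (l : List (Finset (ℤ × ℤ))) (j : ℕ) (hj : j + 1 < l.length) :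
    (swapAt' l j).getD (j + 1) ∅ = l.getD j ∅ := by
  rw [swapAt', List.getD_eq_getElem _ _ (by simp; omega)]
  simp only [List.getElem_set, if_pos rfl]
  simp

lemma getD_swapAt'_other (l : List (Finset (ℤ × ℤ))) (j m : ℕ)
    (h1 : m ≠ j) (h2 : m ≠ j + 1) :
    (swapAt' l j).getD m ∅ = l.getD m ∅ := by
  rcases Nat.lt_or_ge m l.length with hm | hm
  · rw [swapAt', List.getD_eq_getElem _ _ (by simp [swapAt'] at hm ⊢; omega)]
    simp only [List.getElem_set, if_neg (Ne.symm h2), if_neg (Ne.symm h1)]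
    exact (List.getD_eq_getElem l ∅ (by simpa using hm)).symm
  · rw [List.getD_eq_default _ _ (by simp [swapAt']; omega), List.getD_eq_default _ _ hm]

lemma perm_swapAt' : ∀ (l : List (Finset (ℤ × ℤ))) (j : ℕ), j + 1 < l.length →
    List.Perm (swapAt' l j) l := by
  intro l
  induction l with
  | nil => intro j hj; simp at hj
  | cons x t ih =>
    intro j hj
    cases j with
    | zero =>
      cases t with
      | nil => simp at hj
      | cons y s =>
        have : swapAt' (x :: y :: s) 0 = y :: x :: s := by
          simp [swapAt', List.set]
        rw [this]
        exact List.Perm.swap _ _ _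
    | succ j =>
      have he : swapAt' (x :: t) (j + 1) = x :: swapAt' t j := rfl
      rw [he]
      exact List.Perm.cons x (ih j (by simpa using hj))


lemma swap_step {n i : ℕ} {lam mu : Fin n → Bool} {P : Finset (Finset (ℤ × ℤ))}
    (hP : P ∈ Conf1 i lam mu) {o : List (Finset (ℤ × ℤ))} (hnd : o.Nodup)
    (hoP : o.toFinset = P) (hadm : Admissible i lam o) (j : ℕ) (hj : j + 1 < o.length)
    (hdesc : stripHeight (o.getD (j + 1) ∅) < stripHeight (o.getD j ∅)) :
    Distant (o.getD j ∅) (o.getD (j + 1) ∅) ∧ Admissible i lam (swapAt' o j) := by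
  obtain ⟨ν, hν0, hνset, hνstep⟩ := hadm
  have hjlen : j < o.length := by omega
  have hDmem : o.getD j ∅ ∈ P := by
    rw [← hoP]
    exact List.mem_toFinset.mpr (by rw [List.getD_eq_getElem _ _ hjlen]; exact List.getElem_mem _)
  have hCmem : o.getD (j + 1) ∅ ∈ P := by
    rw [← hoP]
    exact List.mem_toFinset.mpr (by rw [List.getD_eq_getElem _ _ hj]; exact List.getElem_mem _)
  have hne : o.getD j ∅ ≠ o.getD (j + 1) ∅ := by
    rw [List.getD_eq_getElem _ _ hjlen, List.getD_eq_getElem _ _ hj]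
    intro h
    have := (List.Nodup.getElem_inj_iff hnd).mp h
    omega
  obtain ⟨hd, hDs⟩ := hP.1.1 _ hDmem
  obtain ⟨hc, hCs⟩ := hP.1.1 _ hCmem
  have htype1 := hP.2 _ hDmem _ hCmem hne
  have hs1 := hνstep j hjlen
  have hs2 := hνstep (j + 1) hj
  obtain ⟨hdist, ν', hν'1, hν'2, hν'3, hν'4, hν'5⟩ :=
    swap_core (hνset j) (hνset (j + 1)) (hνset (j + 2)) hs1.1 hs2.1 hDs hCs hs1.2 hs2.2
      htype1 hdesc
  refine ⟨hdist, fun m => if m = j + 1 then ν' else ν m, ?_, ?_, ?_⟩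
  · simp [hν0]
  · intro m
    by_cases h : m = j + 1 <;> simp [h, hν'1, hνset m]
  · intro m hm
    rw [length_swapAt'] at hm
    dsimp only
    by_cases hmj : m = j
    · subst hmj
      rw [if_neg (by omega), if_pos rfl, getD_swapAt'_left o m hj]
      exact ⟨hν'2, hν'3⟩
    · by_cases hmj1 : m = j + 1
      · subst hmj1
        rw [if_pos rfl, if_neg (by omega), getD_swapAt'_right o j hj]
        exact ⟨hν'4, hν'5⟩
      · rw [if_neg hmj1, if_neg (by omega), getD_swapAt'_other o j m hmj hmj1]
        exact hνstep m hm

def invM (o : List (Finset (ℤ × ℤ))) : ℕ :=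
  ((Finset.range o.length ×ˢ Finset.range o.length).filter fun p =>
    p.1 < p.2 ∧ stripHeight (o.getD p.2 ∅) < stripHeight (o.getD p.1 ∅)).card

lemma invM_swapAt'_lt {o : List (Finset (ℤ × ℤ))} {j : ℕ} (hj : j + 1 < o.length)
    (hdesc : stripHeight (o.getD (j + 1) ∅) < stripHeight (o.getD j ∅)) :
    invM (swapAt' o j) < invM o := by
  set τ : ℕ → ℕ := fun m => if m = j then j + 1 else if m = j + 1 then j else m with hτ
  have hτinv : ∀ m, τ (τ m) = m := by
    intro m; simp only [hτ]; split_ifs <;> omega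
  have hτj : τ j = j + 1 := by simp [hτ]
  have hτj1 : τ (j + 1) = j := by simp [hτ]
  have hget : ∀ m, (swapAt' o j).getD m ∅ = o.getD (τ m) ∅ := by
    intro m
    by_cases h1 : m = j
    · subst h1; rw [hτj]; exact getD_swapAt'_left o m hj
    · by_cases h2 : m = j + 1
      · subst h2; rw [hτj1]; exact getD_swapAt'_right o j hj
      · simp only [hτ, if_neg h1, if_neg h2]
        exact getD_swapAt'_other o j m h1 h2
  set Sold := (Finset.range o.length ×ˢ Finset.range o.length).filter fun p =>
    p.1 < p.2 ∧ stripHeight (o.getD p.2 ∅) < stripHeight (o.getD p.1 ∅) with hSold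
  have hmemold : (j, j + 1) ∈ Sold := by
    simp only [hSold, Finset.mem_filter, Finset.mem_product, Finset.mem_range]
    exact ⟨⟨by omega, hj⟩, by omega, hdesc⟩
  have hle : invM (swapAt' o j) ≤ (Sold.erase (j, j + 1)).card := by
    apply Finset.card_le_card_of_injOn (fun p => (τ p.1, τ p.2))
    · intro p hp
      simp only [Finset.mem_coe, invM, length_swapAt', Finset.mem_filter, Finset.mem_product,
        Finset.mem_range] at hp
      obtain ⟨⟨hp1, hp2⟩, hp3, hp4⟩ := hp
      rw [hget p.1, hget p.2] at hp4
      have hpne : p.1 ≠ j ∨ p.2 ≠ j + 1 := by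
        by_contra hcon
        push_neg at hcon
        rw [hcon.1, hcon.2, hτj, hτj1] at hp4
        omega
      have hord : τ p.1 < τ p.2 := by
        simp only [hτ]; split_ifs <;> omega
      rw [Finset.mem_coe, Finset.mem_erase]
      constructor
      · intro he
        have he1 : τ p.1 = j := congrArg Prod.fst he
        have he2 : τ p.2 = j + 1 := congrArg Prod.snd he
        have e1 : p.1 = τ j := by rw [← he1, hτinv]
        have e2 : p.2 = τ (j + 1) := by rw [← he2, hτinv]
        rw [hτj] at e1; rw [hτj1] at e2
        omega
      · simp only [hSold, Finset.mem_filter, Finset.mem_product, Finset.mem_range]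
        have hl1 : τ p.1 < o.length := by simp only [hτ]; split_ifs <;> omega
        have hl2 : τ p.2 < o.length := by simp only [hτ]; split_ifs <;> omega
        exact ⟨⟨hl1, hl2⟩, hord, hp4⟩
    · intro p _ q _ he
      have he1 : τ p.1 = τ q.1 := congrArg Prod.fst he
      have he2 : τ p.2 = τ q.2 := congrArg Prod.snd he
      have e1 : p.1 = q.1 := by rw [← hτinv p.1, he1, hτinv]
      have e2 : p.2 = q.2 := by rw [← hτinv p.2, he2, hτinv]
      exact Prod.ext e1 e2
  have hpos : 0 < Sold.card := Finset.card_pos.mpr ⟨_, hmemold⟩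
  have herase := Finset.card_erase_of_mem hmemold
  have : invM o = Sold.card := rfl
  omega

lemma toFinset_perm {l l' : List (Finset (ℤ × ℤ))} (h : List.Perm l l') :
    l.toFinset = l'.toFinset := by
  ext x; simp [List.mem_toFinset, h.mem_iff]

lemma sort_lemma {n i : ℕ} {lam mu : Fin n → Bool} {P : Finset (Finset (ℤ × ℤ))}
    (hP : P ∈ Conf1 i lam mu) :
    ∀ (N : ℕ) (o : List (Finset (ℤ × ℤ))), invM o ≤ N → o.Nodup → o.toFinset = P →
      Admissible i lam o →
    ∃ o' : List (Finset (ℤ × ℤ)),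
      Relation.ReflTransGen
        (fun o₁ o₂ => Admissible i lam o₁ ∧ ∃ j, j + 1 < o₁.length ∧
          stripHeight (o₁.getD (j + 1) ∅) < stripHeight (o₁.getD j ∅) ∧
          o₂ = swapAt' o₁ j) o o' ∧
      Admissible i lam o' ∧ o'.toFinset = P ∧
      ∀ j, j + 1 < o'.length →
        stripHeight (o'.getD j ∅) ≤ stripHeight (o'.getD (j + 1) ∅) := by
  intro N
  induction N with
  | zero =>
    intro o hN hnd hoP hadm
    by_cases hs : ∀ j, j + 1 < o.length →
        stripHeight (o.getD j ∅) ≤ stripHeight (o.getD (j + 1) ∅)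
    · exact ⟨o, Relation.ReflTransGen.refl, hadm, hoP, hs⟩
    · exfalso
      push_neg at hs
      obtain ⟨j, hj, hlt⟩ := hs
      have hmem : (j, j + 1) ∈ (Finset.range o.length ×ˢ Finset.range o.length).filter
          (fun p => p.1 < p.2 ∧ stripHeight (o.getD p.2 ∅) < stripHeight (o.getD p.1 ∅)) := by
        simp only [Finset.mem_filter, Finset.mem_product, Finset.mem_range]
        exact ⟨⟨by omega, hj⟩, by omega, hlt⟩
      have : 0 < invM o := Finset.card_pos.mpr ⟨_, hmem⟩
      omega
  | succ N ih =>
    intro o hN hnd hoP hadm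
    by_cases hs : ∀ j, j + 1 < o.length →
        stripHeight (o.getD j ∅) ≤ stripHeight (o.getD (j + 1) ∅)
    · exact ⟨o, Relation.ReflTransGen.refl, hadm, hoP, hs⟩
    · push_neg at hs
      obtain ⟨j, hj, hlt⟩ := hs
      obtain ⟨hdist, hadm'⟩ := swap_step hP hnd hoP hadm j hj hlt
      have hperm := perm_swapAt' o j hj
      have hlt' := invM_swapAt'_lt hj hlt
      obtain ⟨o', hrtg, h1, h2, h3⟩ := ih (swapAt' o j) (by omega)
        (hperm.nodup_iff.mpr hnd) (by rw [toFinset_perm hperm, hoP]) hadm'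
      exact ⟨o', Relation.ReflTransGen.head ⟨hadm, j, hj, hlt, rfl⟩ hrtg,
        h1, h2, h3⟩

end AdmSwapAux

/-- in an admissible ordering of a type-1 Dyck partition, a height descent at
position `j` forces the two strips to be distant and can be swapped, keeping admissibility;
consequently every admissible order can be transformed by such swaps into an admissible order
with weakly increasing heights. -/
theorem admissible_swap (n i : ℕ) (hi1 : 1 ≤ i) (hi2 : i < n)
    (lam mu : Fin n → Bool) (hlam : lam ∈ pathSet n i) (hmu : mu ∈ pathSet n i)
    (hle : pathLE i lam mu)
    (P : Finset (Finset (ℤ × ℤ))) (hP : P ∈ Conf1 i lam mu)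
    (o : List (Finset (ℤ × ℤ))) (hnd : o.Nodup) (hoP : o.toFinset = P)
    (hadm : Admissible i lam o) :
    (∀ j, j + 1 < o.length →
      stripHeight (o.getD (j + 1) ∅) < stripHeight (o.getD j ∅) →
      Distant (o.getD j ∅) (o.getD (j + 1) ∅) ∧ Admissible i lam (swapAt' o j)) ∧
    (∃ o' : List (Finset (ℤ × ℤ)),
      Relation.ReflTransGen
        (fun o₁ o₂ => Admissible i lam o₁ ∧ ∃ j, j + 1 < o₁.length ∧
          stripHeight (o₁.getD (j + 1) ∅) < stripHeight (o₁.getD j ∅) ∧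
          o₂ = swapAt' o₁ j) o o' ∧
      Admissible i lam o' ∧ o'.toFinset = P ∧
      ∀ j, j + 1 < o'.length →
        stripHeight (o'.getD j ∅) ≤ stripHeight (o'.getD (j + 1) ∅)) := by
  constructor
  · intro j hj hdesc
    exact AdmSwapAux.swap_step hP hnd hoP hadm j hj hdesc
  · exact AdmSwapAux.sort_lemma hP (AdmSwapAux.invM o) o le_rfl hnd hoP hadm
end
end
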